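/- The pipe network map PN, sending a tuple of pipe dreams (P_n, P^n, …, P_1, P^1) to the pipe dream in Pipes(v_0, v(Ω)) having P_k in its β_k block, rot(P^k) in its α_k block, and crosses at all other positions of the northwest d_y×d_x subgrid (i.e. containing P_*), is a bijection from the union over v ∈ X_Ω of ∏_{i=1}^n (Pipes(v_i) × Pipes(v^i)) onto Pipes(v_0, v(Ω)). -/

import Mathlib

open scoped Classical

noncomputable section

namespace QP

/-! ### Permutations, Demazure products and pipe dreams.

All permutations are modeled as elements of `Equiv.Perm ℕ` (with 0-indexed
positions); a permutation "in `S_m`" is one fixing every `i ≥ m`. -/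

/-- 0-Hecke (Demazure) right multiplication by the simple transposition `τᵢ = (i, i+1)`. -/
def hstep (u : Equiv.Perm ℕ) (i : ℕ) : Equiv.Perm ℕ :=
  if u i < u (i + 1) then u * Equiv.swap i (i + 1) else u

/-- Demazure product of a word in the simple transpositions (0-indexed). -/
def hword (l : List ℕ) : Equiv.Perm ℕ := l.foldl hstep 1

/-- Row reading word of a pipe dream on a `k × l` grid: rows top-to-bottom, within
each row right-to-left; a cross at (0-indexed) `(i,j)` contributes the letter `i+j`. -/
def pipeWord (k l : ℕ) (P : Finset (ℕ × ℕ)) : List ℕ :=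
  (List.range k).flatMap fun i =>
    (List.range l).reverse.filterMap fun j => if (i, j) ∈ P then some (i + j) else none

/-- Demazure product `δ(P)` of a pipe dream on a `k × l` grid. -/
def demazure (k l : ℕ) (P : Finset (ℕ × ℕ)) : Equiv.Perm ℕ := hword (pipeWord k l P)

/-- Coxeter length of a permutation, computed as the number of inversions among
positions `< m` (the true length whenever the permutation fixes all `i ≥ m`). -/
def lenB (m : ℕ) (v : Equiv.Perm ℕ) : ℕ :=
  ((Finset.range m ×ˢ Finset.range m).filter fun p => p.1 < p.2 ∧ v p.2 < v p.1).card

/-- `v` fixes every point `≥ m`, i.e. `v ∈ S_m`. -/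
def fixesFrom (m : ℕ) (v : Equiv.Perm ℕ) : Prop := ∀ i, m ≤ i → v i = i

/-- A `k × l` partial permutation matrix, recorded as its set of positions of 1s
(0-indexed). -/
def IsPartialPerm (k l : ℕ) (w : Finset (ℕ × ℕ)) : Prop :=
  (∀ p ∈ w, p.1 < k ∧ p.2 < l) ∧
  (∀ p ∈ w, ∀ q ∈ w, p.1 = q.1 → p = q) ∧
  (∀ p ∈ w, ∀ q ∈ w, p.2 = q.2 → p = q)

/-- 180° rotation of a subset of the `k × l` grid. -/
def rotF (k l : ℕ) (w : Finset (ℕ × ℕ)) : Finset (ℕ × ℕ) :=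
  w.image fun p => (k - 1 - p.1, l - 1 - p.2)

/-- Transpose of a subset of a grid. -/
def transposeF (w : Finset (ℕ × ℕ)) : Finset (ℕ × ℕ) := w.image fun p => (p.2, p.1)

/-- The northwest `k × l` truncation of (the matrix of) a permutation. -/
def matrixOf (k l : ℕ) (v : Equiv.Perm ℕ) : Finset (ℕ × ℕ) :=
  (Finset.range k ×ˢ Finset.range l).filter fun p => v p.1 = p.2

/-- `v` is a completion of the `k × l` partial permutation `w`, viewed inside
`S_{k+l}`: its northwest `k × l` corner is exactly `w` and it fixes all `i ≥ k+l`. -/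
def IsCompletion (k l : ℕ) (w : Finset (ℕ × ℕ)) (v : Equiv.Perm ℕ) : Prop :=
  (∀ i < k, ∀ j < l, (v i = j ↔ (i, j) ∈ w)) ∧ fixesFrom (k + l) v

/-- The minimal length completion `c(w)` of a `k × l` partial permutation matrix,
viewed in `S_{k+l}` (equivalently, the minimal-dimension completion extended by the
identity). -/
def completion (k l : ℕ) (w : Finset (ℕ × ℕ)) : Equiv.Perm ℕ :=
  if h : ∃ v, IsCompletion k l w v ∧
      ∀ u, IsCompletion k l w u → lenB (k + l) v ≤ lenB (k + l) u
  then h.choose else 1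

def w0fun (m : ℕ) (i : ℕ) : ℕ := if i < m then m - 1 - i else i

lemma w0_invol (m : ℕ) : Function.Involutive (w0fun m) := by
  intro i; unfold w0fun; split_ifs <;> omega

/-- The longest element of `S_m` (as a permutation of `ℕ` fixing `i ≥ m`). -/
def w0p (m : ℕ) : Equiv.Perm ℕ := (w0_invol m).toPerm

/-- 180° rotation of (the matrix of) a permutation in `S_m`. -/
def rotPerm (m : ℕ) (v : Equiv.Perm ℕ) : Equiv.Perm ℕ := w0p m * v * w0p m

/-- `1^p × v`: the permutation fixing `0, …, p-1` and acting by a shifted copy of `v`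
beyond. -/
def shiftPerm (p : ℕ) (v : Equiv.Perm ℕ) : Equiv.Perm ℕ where
  toFun i := if i < p then i else v (i - p) + p
  invFun i := if i < p then i else v.symm (i - p) + p
  left_inv := by
    intro i
    by_cases h : i < p
    · simp [h]
    · have h2 : ¬ (v (i - p) + p < p) := by omega
      simp only [if_neg h, if_neg h2, Nat.add_sub_cancel, Equiv.symm_apply_apply]
      omega
  right_inv := by
    intro i
    by_cases h : i < p
    · simp [h]
    · have h2 : ¬ (v.symm (i - p) + p < p) := by omega
      simp only [if_neg h, if_neg h2, Nat.add_sub_cancel, Equiv.apply_symm_apply]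
      omega

/-- One step of the 0-Hecke product of two permutations: repeatedly peel left
descents off the second factor. The first argument is fuel (an upper bound for the
length of the second factor). -/
def heckeAux : ℕ → Equiv.Perm ℕ → Equiv.Perm ℕ → Equiv.Perm ℕ
  | 0, u, _ => u
  | fuel + 1, u, v =>
    if h : ∃ i, v.symm (i + 1) < v.symm i then
      heckeAux fuel (hstep u (Nat.find h)) (Equiv.swap (Nat.find h) (Nat.find h + 1) * v)
    else u

/-- 0-Hecke (Demazure) product of two permutations of `S_m`. -/
def heckeMul (m : ℕ) (u v : Equiv.Perm ℕ) : Equiv.Perm ℕ := heckeAux (lenB m v) u v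

/-- 0-Hecke (Demazure) product of a list of permutations of `S_m`. -/
def heckeList (m : ℕ) (l : List (Equiv.Perm ℕ)) : Equiv.Perm ℕ := l.foldl (heckeMul m) 1

/-- All pipe dreams on the `k × l` grid with Demazure product `v`. -/
def pipesFin (k l : ℕ) (v : Equiv.Perm ℕ) : Finset (Finset (ℕ × ℕ)) :=
  ((Finset.range k ×ˢ Finset.range l).powerset).filter fun P => demazure k l P = v

/-- All reduced pipe dreams on the `k × l` grid with Demazure product `v`. -/
def rpipesFin (k l : ℕ) (v : Equiv.Perm ℕ) : Finset (Finset (ℕ × ℕ)) :=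
  (pipesFin k l v).filter fun P => P.card = lenB (k + l) v

end QP

namespace QP

/-! ### The bipartite quiver block structure.

A bipartite type `A` quiver has source vertices `y_0, …, y_n` and sink vertices
`x_1, …, x_n` (indices increasing right-to-left), arrows `β_k : y_k → x_k` and
`α_k : y_{k-1} → x_k`.  Dimension vectors are recorded as `dx dy : ℕ → ℕ` (the
relevant values being `dx 1, …, dx n` and `dy 0, …, dy n`).

`d × d` grids carry the block structure with row blocks `y_0, …, y_n, x_n, …, x_1`
and column blocks `x_n, …, x_1, y_0, …, y_n`; everything is 0-indexed. -/

def dX (n : ℕ) (dx : ℕ → ℕ) : ℕ := ∑ i ∈ Finset.Icc 1 n, dx i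

def dY (n : ℕ) (dy : ℕ → ℕ) : ℕ := ∑ i ∈ Finset.range (n + 1), dy i

def dd (n : ℕ) (dx dy : ℕ → ℕ) : ℕ := dY n dy + dX n dx

/-- Row offset of the row block `y_j`. -/
def rowY (dy : ℕ → ℕ) (j : ℕ) : ℕ := ∑ i ∈ Finset.range j, dy i

/-- Column offset of the column block `x_k`. -/
def colX (n : ℕ) (dx : ℕ → ℕ) (k : ℕ) : ℕ := ∑ i ∈ Finset.Icc (k + 1) n, dx i

/-- Row offset of the row block `x_k`. -/
def rowX (n : ℕ) (dx dy : ℕ → ℕ) (k : ℕ) : ℕ := dY n dy + colX n dx k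

/-- Column offset of the column block `y_j`. -/
def colY (n : ℕ) (dx dy : ℕ → ℕ) (j : ℕ) : ℕ := dX n dx + rowY dy j

/-- The block `α_k`, at (row block `y_{k-1}`, column block `x_k`). -/
def alphaBlock (n : ℕ) (dx dy : ℕ → ℕ) (k : ℕ) : Finset (ℕ × ℕ) :=
  Finset.Ico (rowY dy (k - 1)) (rowY dy (k - 1) + dy (k - 1)) ×ˢ
    Finset.Ico (colX n dx k) (colX n dx k + dx k)

/-- The block `β_k`, at (row block `y_k`, column block `x_k`). -/
def betaBlock (n : ℕ) (dx dy : ℕ → ℕ) (k : ℕ) : Finset (ℕ × ℕ) :=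
  Finset.Ico (rowY dy k) (rowY dy k + dy k) ×ˢ
    Finset.Ico (colX n dx k) (colX n dx k + dx k)

/-- The snake region: the union of the blocks `α_k, β_k`, `1 ≤ k ≤ n`. -/
def snake (n : ℕ) (dx dy : ℕ → ℕ) : Finset (ℕ × ℕ) :=
  (Finset.Icc 1 n).biUnion fun k => alphaBlock n dx dy k ∪ betaBlock n dx dy k

/-- `P_*`: crosses at exactly the positions of the northwest `d_y × d_x` subgrid
outside the snake region. -/
def Pstar (n : ℕ) (dx dy : ℕ → ℕ) : Finset (ℕ × ℕ) :=
  (Finset.range (dY n dy) ×ˢ Finset.range (dX n dx)) \ snake n dx dy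

/-- `Pipes(v_0, v)`: pipe dreams on the `d × d` grid with Demazure product `v`, all
of whose crosses lie in the northwest `d_y × d_x` subgrid. -/
def pipesNW (n : ℕ) (dx dy : ℕ → ℕ) (v : Equiv.Perm ℕ) : Finset (Finset (ℕ × ℕ)) :=
  ((Finset.range (dY n dy) ×ˢ Finset.range (dX n dx)).powerset).filter fun P =>
    demazure (dd n dx dy) (dd n dx dy) P = v

/-- `RPipes(v_0, v)`: the reduced members of `Pipes(v_0, v)`. -/
def rpipesNW (n : ℕ) (dx dy : ℕ → ℕ) (v : Equiv.Perm ℕ) : Finset (Finset (ℕ × ℕ)) :=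
  (pipesNW n dx dy v).filter fun P => P.card = lenB (dd n dx dy) v

/-- The mini pipe dream `P_k`: restriction of `P` to the block `β_k`, in local
coordinates. -/
def miniB (n : ℕ) (dx dy : ℕ → ℕ) (P : Finset (ℕ × ℕ)) (k : ℕ) : Finset (ℕ × ℕ) :=
  (P ∩ betaBlock n dx dy k).image fun p => (p.1 - rowY dy k, p.2 - colX n dx k)

/-- The mini pipe dream `P^k`: restriction of `P` to the block `α_k`, in local
coordinates. -/
def miniA (n : ℕ) (dx dy : ℕ → ℕ) (P : Finset (ℕ × ℕ)) (k : ℕ) : Finset (ℕ × ℕ) :=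
  (P ∩ alphaBlock n dx dy k).image fun p => (p.1 - rowY dy (k - 1), p.2 - colX n dx k)

/-! ### Lacing diagrams and the group `S_𝐝`. -/

/-- Data of a lacing diagram: partial permutations `w_k` (of size `dy k × dx k`,
for the arrows `β_k`) and `w^k` (of size `dy (k-1) × dx k`, for the arrows `α_k`). -/
abbrev LaceData := (ℕ → Finset (ℕ × ℕ)) × (ℕ → Finset (ℕ × ℕ))

/-- Elements of `S_𝐝 = ∏_k (S_{β_k} × S_{α_k})`: tuples `(v_k, v^k)_k` of
permutations, `v_k ∈ S_{dy k + dx k}` and `v^k ∈ S_{dy (k-1) + dx k}`. -/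
abbrev SD := (ℕ → Equiv.Perm ℕ) × (ℕ → Equiv.Perm ℕ)

def IsLacingDiagram (n : ℕ) (dx dy : ℕ → ℕ) (L : LaceData) : Prop :=
  (∀ k, 1 ≤ k → k ≤ n →
    IsPartialPerm (dy k) (dx k) (L.1 k) ∧ IsPartialPerm (dy (k - 1)) (dx k) (L.2 k)) ∧
  (∀ k, k = 0 ∨ n < k → L.1 k = ∅ ∧ L.2 k = ∅)

def InSD (n : ℕ) (dx dy : ℕ → ℕ) (x : SD) : Prop :=
  (∀ k, 1 ≤ k → k ≤ n →
    fixesFrom (dy k + dx k) (x.1 k) ∧ fixesFrom (dy (k - 1) + dx k) (x.2 k)) ∧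
  (∀ k, k = 0 ∨ n < k → x.1 k = 1 ∧ x.2 k = 1)

/-- The completion map `𝔠 : Laces(𝐝) → S_𝐝`,
`(w_n, w^n, …) ↦ (c(w_n), c(rot(w^n)), …)`. -/
def cOp (n : ℕ) (dx dy : ℕ → ℕ) (L : LaceData) : SD :=
  (fun k => if 1 ≤ k ∧ k ≤ n then completion (dy k) (dx k) (L.1 k) else 1,
   fun k => if 1 ≤ k ∧ k ≤ n then
      completion (dy (k - 1)) (dx k) (rotF (dy (k - 1)) (dx k) (L.2 k)) else 1)

/-- The truncation map `LD : S_𝐝 → Laces(𝐝)`,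
`(v_k, v^k)_k ↦ (t_k(v_k), rot(t^k(v^k)))_k`. -/
def LDOp (n : ℕ) (dx dy : ℕ → ℕ) (x : SD) : LaceData :=
  (fun k => if 1 ≤ k ∧ k ≤ n then matrixOf (dy k) (dx k) (x.1 k) else ∅,
   fun k => if 1 ≤ k ∧ k ≤ n then
      rotF (dy (k - 1)) (dx k) (matrixOf (dy (k - 1)) (dx k) (x.2 k)) else ∅)

/-- The operation `π` on pipe dreams:
`π(P) = (δ(P_n), δ(rot(P^n)), …, δ(P_1), δ(rot(P^1))) ∈ S_𝐝`. -/
def piOp (n : ℕ) (dx dy : ℕ → ℕ) (P : Finset (ℕ × ℕ)) : SD :=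
  (fun k => if 1 ≤ k ∧ k ≤ n then demazure (dy k) (dx k) (miniB n dx dy P k) else 1,
   fun k => if 1 ≤ k ∧ k ≤ n then
      demazure (dy (k - 1)) (dx k) (rotF (dy (k - 1)) (dx k) (miniA n dx dy P k)) else 1)

/-- "Follow the pipes" for a single pipe dream on a `k × l` grid: the partial
permutation matrix connecting the west wall to the north wall (double crossings of a
pair of pipes being ignored); concretely, the northwest `k × l` truncation of the
matrix of the Demazure product. -/
def followPipes (k l : ℕ) (P : Finset (ℕ × ℕ)) : Finset (ℕ × ℕ) :=
  matrixOf k l (demazure k l P)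

/-- The pipes-to-laces operation `𝔴`. -/
def wOp (n : ℕ) (dx dy : ℕ → ℕ) (P : Finset (ℕ × ℕ)) : LaceData :=
  (fun k => if 1 ≤ k ∧ k ≤ n then followPipes (dy k) (dx k) (miniB n dx dy P k) else ∅,
   fun k => if 1 ≤ k ∧ k ≤ n then
      rotF (dy (k - 1)) (dx k)
        (followPipes (dy (k - 1)) (dx k) (rotF (dy (k - 1)) (dx k) (miniA n dx dy P k)))
    else ∅)

end QP

namespace QP

/-! ### Laces and lace counts.

Columns of a lacing diagram are indexed left-to-right by `1, …, 2n+1`: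
odd position `2m+1` carries the vertex `y_{n-m}`, even position `2m` the vertex
`x_{n-m+1}`. -/

/-- Number of dots in the column at position `p`. -/
def colSize (n : ℕ) (dx dy : ℕ → ℕ) (p : ℕ) : ℕ :=
  if p % 2 = 1 then dy (n - (p - 1) / 2) else dx (n - p / 2 + 1)

/-- The matching (partial permutation) between consecutive columns `p` and `p+1`
of a lacing diagram. -/
def matchingAt (n : ℕ) (_dx _dy : ℕ → ℕ) (L : LaceData) (p : ℕ) : Finset (ℕ × ℕ) :=
  if p % 2 = 1 then L.1 (n - (p - 1) / 2) else transposeF (L.2 (n - p / 2 + 1))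

/-- Composition of relations (partial permutations). -/
def compF (A B : Finset (ℕ × ℕ)) : Finset (ℕ × ℕ) :=
  ((A ×ˢ B).filter fun q => q.1.2 = q.2.1).image fun q => (q.1.1, q.2.2)

/-- Paths of the lacing diagram from column `u` to column `u + t`. -/
def pathF (n : ℕ) (dx dy : ℕ → ℕ) (L : LaceData) (u : ℕ) : ℕ → Finset (ℕ × ℕ)
  | 0 => (Finset.range (colSize n dx dy u)).image fun i => (i, i)
  | t + 1 => compF (pathF n dx dy L u t) (matchingAt n dx dy L (u + t))

/-- Number of paths (strands) of the lacing diagram connecting column `u` to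
column `v` (zero if out of range). -/
def pathCount (n : ℕ) (dx dy : ℕ → ℕ) (L : LaceData) (u v : ℕ) : ℕ :=
  if 1 ≤ u ∧ u ≤ v ∧ v ≤ 2 * n + 1 then (pathF n dx dy L u (v - u)).card else 0

/-- Number of laces with left endpoint in column `u` and right endpoint in column
`v` (by inclusion–exclusion on path counts). -/
def laceCount (n : ℕ) (dx dy : ℕ → ℕ) (L : LaceData) (u v : ℕ) : ℤ :=
  (pathCount n dx dy L u v : ℤ) - pathCount n dx dy L (u - 1) v
    - pathCount n dx dy L u (v + 1) + pathCount n dx dy L (u - 1) (v + 1)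

/-- Two lacing diagrams lie in the same `GL(𝐝)`-orbit iff they have the same number
of laces between any two pairs of columns. -/
def sameOrbit (n : ℕ) (dx dy : ℕ → ℕ) (L L' : LaceData) : Prop :=
  ∀ u v, laceCount n dx dy L u v = laceCount n dx dy L' u v

/-- `|w|`: the number of crossings in the extended lacing diagram of `w`, namely
`Σ_k ℓ(c(w_k)) + Σ_k ℓ(c(rot(w^k)))`. -/
def lacingLength (n : ℕ) (dx dy : ℕ → ℕ) (L : LaceData) : ℕ :=
  (∑ k ∈ Finset.Icc 1 n, lenB (dy k + dx k) (completion (dy k) (dx k) (L.1 k))) +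
  ∑ k ∈ Finset.Icc 1 n,
    lenB (dy (k - 1) + dx k)
      (completion (dy (k - 1)) (dx k) (rotF (dy (k - 1)) (dx k) (L.2 k)))

/-- `W(Ω)`: minimal lacing diagrams in the orbit of `L₀`. -/
def MinimalLacings (n : ℕ) (dx dy : ℕ → ℕ) (L₀ : LaceData) : Set LaceData :=
  {w | IsLacingDiagram n dx dy w ∧ sameOrbit n dx dy w L₀ ∧
    ∀ w', IsLacingDiagram n dx dy w' → sameOrbit n dx dy w' L₀ →
      lacingLength n dx dy w ≤ lacingLength n dx dy w'}

/-! ### The Zelevinsky permutation. -/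

/-- The set of rows of the row block of the vertex at position `p`. -/
def vertRowBlock (n : ℕ) (dx dy : ℕ → ℕ) (p : ℕ) : Finset ℕ :=
  if p % 2 = 1 then
    Finset.Ico (rowY dy (n - (p - 1) / 2)) (rowY dy (n - (p - 1) / 2) + dy (n - (p - 1) / 2))
  else
    Finset.Ico (rowX n dx dy (n - p / 2 + 1)) (rowX n dx dy (n - p / 2 + 1) + dx (n - p / 2 + 1))

/-- The set of columns of the column block of the vertex at position `p`. -/
def vertColBlock (n : ℕ) (dx dy : ℕ → ℕ) (p : ℕ) : Finset ℕ :=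
  if p % 2 = 1 then
    Finset.Ico (colY n dx dy (n - (p - 1) / 2)) (colY n dx dy (n - (p - 1) / 2) + dy (n - (p - 1) / 2))
  else
    Finset.Ico (colX n dx (n - p / 2 + 1)) (colX n dx (n - p / 2 + 1) + dx (n - p / 2 + 1))

/-- Number of 1s of the permutation matrix of `v` in the rows `R` and columns `C`. -/
def onesIn (v : Equiv.Perm ℕ) (R C : Finset ℕ) : ℕ := (R.filter fun i => v i ∈ C).card

/-- `v` is the (bipartite) Zelevinsky permutation of the orbit of the lacing diagram
`L`: conditions (Z1), (Z2) on block entry counts and (Z3) northwest-to-southeast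
arrangement in each block row and block column. -/
def IsZelevinsky (n : ℕ) (dx dy : ℕ → ℕ) (L : LaceData) (v : Equiv.Perm ℕ) : Prop :=
  fixesFrom (dd n dx dy) v ∧
  -- (Z1)
  (∀ pu pv, 1 ≤ pu → pu ≤ pv → pv ≤ 2 * n + 1 →
    (onesIn v (vertRowBlock n dx dy pu) (vertColBlock n dx dy pv) : ℤ)
      = laceCount n dx dy L pu pv) ∧
  -- (Z2)
  (∀ p, 1 ≤ p → p + 1 ≤ 2 * n + 1 →
    onesIn v (vertRowBlock n dx dy (p + 1)) (vertColBlock n dx dy p)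
      = (matchingAt n dx dy L p).card) ∧
  -- (Z3), block rows
  (∀ p, 1 ≤ p → p ≤ 2 * n + 1 → ∀ i ∈ vertRowBlock n dx dy p, ∀ i' ∈ vertRowBlock n dx dy p,
    i < i' →
    (∃ q, 1 ≤ q ∧ q ≤ 2 * n + 1 ∧ v i ∈ vertColBlock n dx dy q ∧ v i' ∈ vertColBlock n dx dy q) →
    v i < v i') ∧
  -- (Z3), block columns
  (∀ p, 1 ≤ p → p ≤ 2 * n + 1 → ∀ j ∈ vertColBlock n dx dy p, ∀ j' ∈ vertColBlock n dx dy p,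
    j < j' →
    (∃ q, 1 ≤ q ∧ q ≤ 2 * n + 1 ∧ v.symm j ∈ vertRowBlock n dx dy q ∧
      v.symm j' ∈ vertRowBlock n dx dy q) →
    v.symm j < v.symm j')

/-- `v_*`: the Zelevinsky permutation of the whole representation space, i.e. the
Zelevinsky permutation of an orbit, of minimal length (the dense orbit). -/
def IsStarZelevinsky (n : ℕ) (dx dy : ℕ → ℕ) (v : Equiv.Perm ℕ) : Prop :=
  (∃ L, IsLacingDiagram n dx dy L ∧ IsZelevinsky n dx dy L v) ∧
  ∀ L' v', IsLacingDiagram n dx dy L' → IsZelevinsky n dx dy L' v' →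
    lenB (dd n dx dy) v ≤ lenB (dd n dx dy) v'

/-! ### `X_Ω`, pipe networks, and moves. -/

/-- `X_Ω = {π(P) : P ∈ Pipes(v_0, v(Ω))}` (here parametrized by `v(Ω)`). -/
def XOmega (n : ℕ) (dx dy : ℕ → ℕ) (vZ : Equiv.Perm ℕ) : Set SD :=
  {x | ∃ P ∈ pipesNW n dx dy vZ, piOp n dx dy P = x}

/-- `X_Ω^red = {π(P) : P ∈ RPipes(v_0, v(Ω))}`. -/
def XOmegaRed (n : ℕ) (dx dy : ℕ → ℕ) (vZ : Equiv.Perm ℕ) : Set SD :=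
  {x | ∃ P ∈ rpipesNW n dx dy vZ, piOp n dx dy P = x}

/-- Pipe networks for a lacing diagram `w`: pipe dreams on the `d_y × d_x` grid
containing `P_*` with `P_k ∈ Pipes(w_k)` and `rot(P^k) ∈ Pipes(w^k)` for all `k`. -/
def PipeNet (n : ℕ) (dx dy : ℕ → ℕ) (w : LaceData) : Set (Finset (ℕ × ℕ)) :=
  {P | (∀ p ∈ P, p.1 < dY n dy ∧ p.2 < dX n dx) ∧ Pstar n dx dy ⊆ P ∧
    ∀ k, 1 ≤ k → k ≤ n →
      demazure (dy k) (dx k) (miniB n dx dy P k) = completion (dy k) (dx k) (w.1 k) ∧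
      demazure (dy (k - 1)) (dx k) (rotF (dy (k - 1)) (dx k) (miniA n dx dy P k))
        = completion (dy (k - 1)) (dx k) (w.2 k)}

/-- PN-reduced pipe networks: each mini pipe dream is a reduced pipe dream of the
corresponding partial permutation. -/
def RPipeNet (n : ℕ) (dx dy : ℕ → ℕ) (w : LaceData) : Set (Finset (ℕ × ℕ)) :=
  {P | P ∈ PipeNet n dx dy w ∧ ∀ k, 1 ≤ k → k ≤ n →
    (miniB n dx dy P k).card = lenB (dy k + dx k) (completion (dy k) (dx k) (w.1 k)) ∧
    (rotF (dy (k - 1)) (dx k) (miniA n dx dy P k)).card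
      = lenB (dy (k - 1) + dx k) (completion (dy (k - 1)) (dx k) (w.2 k))}

def updB (z : SD) (i : ℕ) (p : Equiv.Perm ℕ) : SD := (Function.update z.1 i p, z.2)

def updA (z : SD) (i : ℕ) (p : Equiv.Perm ℕ) : SD := (z.1, Function.update z.2 i p)

/-- The three tuples `(…, τ_k v_i, v^i, …)`, `(…, v_i, rot(τ_{k'} rot(v^i)), …)`,
`(…, τ_k v_i, rot(τ_{k'} rot(v^i)), …)` obtained from the base tuple `z` at a middle
column `x_i` and middle dots `k, k+1` (0-indexed; `k' = dy (i-1) + k`). -/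
def tripleX (dx dy : ℕ → ℕ) (z : SD) (i k : ℕ) : Set SD :=
  {updB z i (Equiv.swap k (k + 1) * z.1 i),
   updA z i (rotPerm (dy (i - 1) + dx i)
     (Equiv.swap (dy (i - 1) + k) (dy (i - 1) + k + 1) * rotPerm (dy (i - 1) + dx i) (z.2 i))),
   updA (updB z i (Equiv.swap k (k + 1) * z.1 i)) i
     (rotPerm (dy (i - 1) + dx i)
       (Equiv.swap (dy (i - 1) + k) (dy (i - 1) + k + 1) * rotPerm (dy (i - 1) + dx i) (z.2 i)))}

/-- The three tuples `(…, v^{i+1}, v_i τ_l, …)`, `(…, rot(rot(v^{i+1}) τ_{l'}), v_i, …)`,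
`(…, rot(rot(v^{i+1}) τ_{l'}), v_i τ_l, …)` obtained from the base tuple `z` at a middle
column `y_i` and middle dots `l, l+1` (0-indexed; `l' = dx (i+1) + l`). -/
def tripleY (dx dy : ℕ → ℕ) (z : SD) (i l : ℕ) : Set SD :=
  {updB z i (z.1 i * Equiv.swap l (l + 1)),
   updA z (i + 1) (rotPerm (dy i + dx (i + 1))
     (rotPerm (dy i + dx (i + 1)) (z.2 (i + 1)) *
       Equiv.swap (dx (i + 1) + l) (dx (i + 1) + l + 1))),
   updA (updB z i (z.1 i * Equiv.swap l (l + 1))) (i + 1)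
     (rotPerm (dy i + dx (i + 1))
       (rotPerm (dy i + dx (i + 1)) (z.2 (i + 1)) *
         Equiv.swap (dx (i + 1) + l) (dx (i + 1) + l + 1)))}

/-- The transposition moves on `S_𝐝` (the moves of the transposition-move lemma,
interchanging any two of the tuples of types 1(a), 1(b), 1(c), respectively
2(a), 2(b), 2(c), under the stated ascent conditions). -/
def Move14Rel (n : ℕ) (dx dy : ℕ → ℕ) (u u' : SD) : Prop :=
  (∃ z : SD, ∃ i k, 1 ≤ i ∧ i ≤ n ∧ k + 1 < dx i ∧
    (z.1 i).symm k < (z.1 i).symm (k + 1) ∧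
    (rotPerm (dy (i - 1) + dx i) (z.2 i)).symm (dy (i - 1) + k)
      < (rotPerm (dy (i - 1) + dx i) (z.2 i)).symm (dy (i - 1) + k + 1) ∧
    u ∈ tripleX dx dy z i k ∧ u' ∈ tripleX dx dy z i k ∧ u ≠ u') ∨
  (∃ z : SD, ∃ i l, 1 ≤ i ∧ i + 1 ≤ n ∧ l + 1 < dy i ∧
    z.1 i l < z.1 i (l + 1) ∧
    z.2 (i + 1) (dx (i + 1) + l) < z.2 (i + 1) (dx (i + 1) + l + 1) ∧
    u ∈ tripleY dx dy z i l ∧ u' ∈ tripleY dx dy z i l ∧ u ≠ u')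

/-- The K-theoretic lacing diagram moves, at the level of extended lacing diagrams
(elements of `S_𝐝`): local moves at a middle column (`x_i` or `y_i`) through two
adjacent non-virtual middle dots, where the two strands through the middle dots are
uncrossed on both sides in the base configuration and at least one of their endpoints
in each outer column is non-virtual; any two of the three resulting configurations
(crossed left / crossed both / crossed right) are interchanged. -/
def KMoveRel (n : ℕ) (dx dy : ℕ → ℕ) (u u' : SD) : Prop :=
  (∃ z : SD, ∃ i k, 1 ≤ i ∧ i ≤ n ∧ k + 1 < dx i ∧
    (z.1 i).symm k < (z.1 i).symm (k + 1) ∧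
    (rotPerm (dy (i - 1) + dx i) (z.2 i)).symm (dy (i - 1) + k)
      < (rotPerm (dy (i - 1) + dx i) (z.2 i)).symm (dy (i - 1) + k + 1) ∧
    ((z.1 i).symm k < dy i ∨ (z.1 i).symm (k + 1) < dy i) ∧
    (dx i ≤ (rotPerm (dy (i - 1) + dx i) (z.2 i)).symm (dy (i - 1) + k) ∨
      dx i ≤ (rotPerm (dy (i - 1) + dx i) (z.2 i)).symm (dy (i - 1) + k + 1)) ∧
    u ∈ tripleX dx dy z i k ∧ u' ∈ tripleX dx dy z i k ∧ u ≠ u') ∨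
  (∃ z : SD, ∃ i l, 1 ≤ i ∧ i + 1 ≤ n ∧ l + 1 < dy i ∧
    z.1 i l < z.1 i (l + 1) ∧
    rotPerm (dy i + dx (i + 1)) (z.2 (i + 1)) (dx (i + 1) + l)
      < rotPerm (dy i + dx (i + 1)) (z.2 (i + 1)) (dx (i + 1) + l + 1) ∧
    (z.1 i l < dx i ∨ z.1 i (l + 1) < dx i) ∧
    (dy i ≤ rotPerm (dy i + dx (i + 1)) (z.2 (i + 1)) (dx (i + 1) + l) ∨
      dy i ≤ rotPerm (dy i + dx (i + 1)) (z.2 (i + 1)) (dx (i + 1) + l + 1)) ∧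
    u ∈ tripleY dx dy z i l ∧ u' ∈ tripleY dx dy z i l ∧ u ≠ u')

/-- Extended diagrams reachable from (the completion of) a minimal lacing diagram by
K-theoretic lacing diagram moves. -/
def KWext (n : ℕ) (dx dy : ℕ → ℕ) (L₀ : LaceData) : Set SD :=
  {x | ∃ w ∈ MinimalLacings n dx dy L₀,
    Relation.ReflTransGen (KMoveRel n dx dy) (cOp n dx dy w) x}

/-- `KW(Ω)`: the K-theoretic lacing diagrams for the orbit of `L₀`. -/
def KW (n : ℕ) (dx dy : ℕ → ℕ) (L₀ : LaceData) : Set LaceData :=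
  LDOp n dx dy '' KWext n dx dy L₀

end QP

namespace QP

/-! ### Alphabets and Schubert / Grothendieck polynomials. -/

/-- Index of the row block `y_j` containing row `r` (for `r < d_y`). -/
def yRowIdx (n : ℕ) (dy : ℕ → ℕ) (r : ℕ) : ℕ :=
  WithBot.unbotD 0 (((Finset.range (n + 1)).filter fun j => rowY dy j ≤ r).max)

/-- Index of the row block `x_k` containing row `r` (for `d_y ≤ r < d`). -/
def xRowIdx (n : ℕ) (dx dy : ℕ → ℕ) (r : ℕ) : ℕ :=
  WithTop.untopD 0 (((Finset.Icc 1 n).filter fun k => rowX n dx dy k ≤ r).min)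

/-- Index of the column block `x_k` containing column `c` (for `c < d_x`). -/
def xColIdx (n : ℕ) (dx : ℕ → ℕ) (c : ℕ) : ℕ :=
  WithTop.untopD 0 (((Finset.Icc 1 n).filter fun k => colX n dx k ≤ c).min)

/-- Index of the column block `y_j` containing column `c` (for `d_x ≤ c < d`). -/
def yColIdx (n : ℕ) (dx dy : ℕ → ℕ) (c : ℕ) : ℕ :=
  WithBot.unbotD 0 (((Finset.range (n + 1)).filter fun j => colY n dx dy j ≤ c).max)

variable {K : Type*}

/-- The variable attached to row `r` of the `d × d` grid: the concatenated alphabet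
`(𝐭, 𝐬) = (𝐭^0, …, 𝐭^n, 𝐬^n, …, 𝐬^1)`.  Here `t k i` is the variable `t^k_{i+1}`
and `s k j` is the variable `s^k_{j+1}`. -/
def rowVar [CommRing K] (n : ℕ) (dx dy : ℕ → ℕ) (t s : ℕ → ℕ → K) (r : ℕ) : K :=
  if r < dY n dy then t (yRowIdx n dy r) (r - rowY dy (yRowIdx n dy r))
  else s (xRowIdx n dx dy r) (r - rowX n dx dy (xRowIdx n dx dy r))

/-- The variable attached to column `c` of the `d × d` grid: the concatenated
alphabet `(𝐬, 𝐭) = (𝐬^n, …, 𝐬^1, 𝐭^0, …, 𝐭^n)`. -/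
def colVar [CommRing K] (n : ℕ) (dx dy : ℕ → ℕ) (t s : ℕ → ℕ → K) (c : ℕ) : K :=
  if c < dX n dx then s (xColIdx n dx c) (c - colX n dx (xColIdx n dx c))
  else t (yColIdx n dx dy c) (c - colY n dx dy (yColIdx n dx dy c))

/-- The double Schubert polynomial `𝔖_v(a; b)` (pipe dream formula, on a `k × l`
grid). -/
def schubert [CommRing K] (k l : ℕ) (v : Equiv.Perm ℕ) (a b : ℕ → K) : K :=
  ∑ P ∈ rpipesFin k l v, ∏ p ∈ P, (a p.1 - b p.2)

/-- The double Grothendieck polynomial `𝔊_v(a; b)` (pipe dream formula, on a `k × l`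
grid). -/
def grothendieck [Field K] (k l : ℕ) (v : Equiv.Perm ℕ) (a b : ℕ → K) : K :=
  ∑ P ∈ pipesFin k l v,
    (-1 : K) ^ ((P.card : ℤ) - (lenB (k + l) v : ℤ)) * ∏ p ∈ P, (1 - a p.1 / b p.2)

/-- `𝔖_𝐰(𝐭; 𝐬) = ∏_k 𝔖_{w_k}(𝐭^k; 𝐬^k) ⬝ ∏_k 𝔖_{rot(w^k)}(𝐭̃^{k-1}; 𝐬̃^k)` for a lacing
diagram `𝐰` (Schubert polynomials of partial permutations being those of their
minimal-length completions). -/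
def schubertLace [CommRing K] (n : ℕ) (dx dy : ℕ → ℕ) (w : LaceData)
    (t s : ℕ → ℕ → K) : K :=
  (∏ k ∈ Finset.Icc 1 n,
    schubert (dy k) (dx k) (completion (dy k) (dx k) (w.1 k))
      (fun i => t k i) (fun j => s k j)) *
  ∏ k ∈ Finset.Icc 1 n,
    schubert (dy (k - 1)) (dx k)
      (completion (dy (k - 1)) (dx k) (rotF (dy (k - 1)) (dx k) (w.2 k)))
      (fun i => t (k - 1) (dy (k - 1) - 1 - i)) (fun j => s k (dx k - 1 - j))

/-- `𝔊_𝐰(𝐭; 𝐬) = ∏_k 𝔊_{w_k}(𝐭^k; 𝐬^k) ⬝ ∏_k 𝔊_{rot(w^k)}(𝐭̃^{k-1}; 𝐬̃^k)`. -/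
def grothendieckLace [Field K] (n : ℕ) (dx dy : ℕ → ℕ) (w : LaceData)
    (t s : ℕ → ℕ → K) : K :=
  (∏ k ∈ Finset.Icc 1 n,
    grothendieck (dy k) (dx k) (completion (dy k) (dx k) (w.1 k))
      (fun i => t k i) (fun j => s k j)) *
  ∏ k ∈ Finset.Icc 1 n,
    grothendieck (dy (k - 1)) (dx k)
      (completion (dy (k - 1)) (dx k) (rotF (dy (k - 1)) (dx k) (w.2 k)))
      (fun i => t (k - 1) (dy (k - 1) - 1 - i)) (fun j => s k (dx k - 1 - j))

/-! ### Data for the Demazure-product factorization of the Zelevinsky permutation. -/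

/-- `ε^k`: Demazure product of the pipe dream with crosses at all positions strictly
north of the block `α_k`. -/
def epsA (n : ℕ) (dx dy : ℕ → ℕ) (k : ℕ) : Equiv.Perm ℕ :=
  demazure (dY n dy) (dX n dx)
    (Finset.range (rowY dy (k - 1)) ×ˢ Finset.Ico (colX n dx k) (colX n dx k + dx k))

/-- `ε_k`: Demazure product of the pipe dream with crosses at all positions strictly
south of the block `β_k` (inside the `d_y × d_x` grid). -/
def epsB (n : ℕ) (dx dy : ℕ → ℕ) (k : ℕ) : Equiv.Perm ℕ :=
  demazure (dY n dy) (dX n dx)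
    (Finset.Ico (rowY dy k + dy k) (dY n dy) ×ˢ Finset.Ico (colX n dx k) (colX n dx k + dx k))

/-- `θ^k`: Demazure product of the pipe dream with crosses at all positions strictly
west of the block `α_k`. -/
def thA (n : ℕ) (dx dy : ℕ → ℕ) (k : ℕ) : Equiv.Perm ℕ :=
  demazure (dY n dy) (dX n dx)
    (Finset.Ico (rowY dy (k - 1)) (rowY dy (k - 1) + dy (k - 1)) ×ˢ Finset.range (colX n dx k))

/-- `θ_k`: Demazure product of the pipe dream with crosses at all positions strictly
east of the block `β_k` (inside the `d_y × d_x` grid). -/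
def thB (n : ℕ) (dx dy : ℕ → ℕ) (k : ℕ) : Equiv.Perm ℕ :=
  demazure (dY n dy) (dX n dx)
    (Finset.Ico (rowY dy k) (rowY dy k + dy k) ×ˢ Finset.Ico (colX n dx k + dx k) (dX n dx))

/-- `a_k = Σ_{i>k} dx i + Σ_{i<k-1} dy i`. -/
def aOff (n : ℕ) (dx dy : ℕ → ℕ) (k : ℕ) : ℕ := colX n dx k + rowY dy (k - 1)

/-- `b_k = Σ_{i>k} dx i + Σ_{i<k} dy i`. -/
def bOff (n : ℕ) (dx dy : ℕ → ℕ) (k : ℕ) : ℕ := colX n dx k + rowY dy k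

/-- `w_k = 1^{b_k} × v_k`. -/
def wShB (n : ℕ) (dx dy : ℕ → ℕ) (x : SD) (k : ℕ) : Equiv.Perm ℕ :=
  shiftPerm (bOff n dx dy k) (x.1 k)

/-- `w^k = 1^{a_k} × rot((v^k)⁻¹)`. -/
def wShA (n : ℕ) (dx dy : ℕ → ℕ) (x : SD) (k : ℕ) : Equiv.Perm ℕ :=
  shiftPerm (aOff n dx dy k) (rotPerm (dy (k - 1) + dx k) (x.2 k)⁻¹)

/-- The factor list `(w^1 w_1 ε_1)(ε^2 w^2 w_2 ε_2) ⋯ (ε^n w^n w_n)` (the factors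
`ε^1` and `ε_n` being the identity). -/
def factorList2 (n : ℕ) (dx dy : ℕ → ℕ) (x : SD) : List (Equiv.Perm ℕ) :=
  ((List.range' 1 n).map fun k =>
    [epsA n dx dy k, wShA n dx dy x k, wShB n dx dy x k, epsB n dx dy k]).flatten

/-- The factor list `(w^1 θ^1)(w_1 w^2 θ^2)(θ_2 w_2 w^3 θ^3) ⋯ (θ_{n-1} w_{n-1} w^n)(θ_n w_n)`
(the factor `θ_1` being the identity). -/
def factorList3 (n : ℕ) (dx dy : ℕ → ℕ) (x : SD) : List (Equiv.Perm ℕ) :=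
  [wShA n dx dy x 1, thA n dx dy 1] ++
    ((List.range' 1 n).map fun k =>
      [thB n dx dy k, wShB n dx dy x k] ++
        (if k = n then [] else [wShA n dx dy x (k + 1), thA n dx dy (k + 1)])).flatten

end QP


namespace QP

/-- The domain of the pipe network map: tuples of pipe dreams
`(P_k ∈ Pipes(v_k), P^k ∈ Pipes(v^k))_k` for some `v ∈ X_Ω`. -/
def PNdomain (n : ℕ) (dx dy : ℕ → ℕ) (vZ : Equiv.Perm ℕ) : Set LaceData :=
  {T | (∀ k, k = 0 ∨ n < k → T.1 k = ∅ ∧ T.2 k = ∅) ∧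
    ∃ x ∈ XOmega n dx dy vZ, ∀ k, 1 ≤ k → k ≤ n →
      T.1 k ∈ pipesFin (dy k) (dx k) (x.1 k) ∧
      T.2 k ∈ pipesFin (dy (k - 1)) (dx k) (x.2 k)}

/-- The pipe network map `PN`: place `P_k` in the `β_k` block, `rot(P^k)` in the
`α_k` block, and crosses everywhere else in the northwest `d_y × d_x` subgrid. -/
def PNmap (n : ℕ) (dx dy : ℕ → ℕ) (T : LaceData) : Finset (ℕ × ℕ) :=
  Pstar n dx dy ∪ (Finset.Icc 1 n).biUnion fun k =>
    ((T.1 k).image fun p => (p.1 + rowY dy k, p.2 + colX n dx k)) ∪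
      ((rotF (dy (k - 1)) (dx k) (T.2 k)).image fun p =>
        (p.1 + rowY dy (k - 1), p.2 + colX n dx k))



/-! ### Auxiliary development for the pipe network bijection. -/

section PNproof

open List

/-- fold of `hstep` -/
def hf (u : Equiv.Perm ℕ) (l : List ℕ) : Equiv.Perm ℕ := l.foldl hstep u

@[simp] lemma hf_nil (u : Equiv.Perm ℕ) : hf u [] = u := rfl

@[simp] lemma hf_cons (u : Equiv.Perm ℕ) (a : ℕ) (l : List ℕ) :
    hf u (a :: l) = hf (hstep u a) l := rfl

lemma hword_def (l : List ℕ) : hword l = hf 1 l := rfl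

lemma hf_append (u : Equiv.Perm ℕ) (l₁ l₂ : List ℕ) :
    hf u (l₁ ++ l₂) = hf (hf u l₁) l₂ := List.foldl_append ..

lemma hf_singleton (u : Equiv.Perm ℕ) (a : ℕ) : hf u [a] = hstep u a := rfl

lemma hstep_of_lt {u : Equiv.Perm ℕ} {a : ℕ} (h : u a < u (a + 1)) :
    hstep u a = u * Equiv.swap a (a + 1) := if_pos h

lemma hstep_of_ge {u : Equiv.Perm ℕ} {a : ℕ} (h : ¬ u a < u (a + 1)) :
    hstep u a = u := if_neg h

lemma hstep_apply_of_ne (u : Equiv.Perm ℕ) (a x : ℕ) (h1 : x ≠ a) (h2 : x ≠ a + 1) :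
    hstep u a x = u x := by
  unfold hstep
  split_ifs with h
  · simp [Equiv.Perm.mul_apply, Equiv.swap_apply_of_ne_of_ne h1 h2]
  · rfl

lemma hf_apply_of_lt (l : List ℕ) (u : Equiv.Perm ℕ) (x : ℕ) (h : ∀ a ∈ l, x < a) :
    hf u l x = u x := by
  induction l generalizing u with
  | nil => rfl
  | cons a l ih =>
      have hx : x < a := h a (by simp)
      rw [hf_cons, ih _ (fun b hb => h b (by simp [hb])),
        hstep_apply_of_ne u a x (by omega) (by omega)]

lemma swap_succ_comm (a b : ℕ) (h : a + 2 ≤ b ∨ b + 2 ≤ a) :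
    Equiv.swap a (a + 1) * Equiv.swap b (b + 1) = Equiv.swap b (b + 1) * Equiv.swap a (a + 1) := by
  ext x
  simp only [Equiv.Perm.mul_apply, Equiv.swap_apply_def]
  rcases h with h | h <;> split_ifs <;> omega

lemma mul_swap_apply_of_ne (u : Equiv.Perm ℕ) (a x : ℕ) (h1 : x ≠ a) (h2 : x ≠ a + 1) :
    (u * Equiv.swap a (a + 1)) x = u x := by
  simp [Equiv.Perm.mul_apply, Equiv.swap_apply_of_ne_of_ne h1 h2]

lemma hstep_comm (u : Equiv.Perm ℕ) (a b : ℕ) (h : a + 2 ≤ b ∨ b + 2 ≤ a) :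
    hstep (hstep u a) b = hstep (hstep u b) a := by
  have hba : b ≠ a := by omega
  have hba1 : b ≠ a + 1 := by omega
  have hb1a : b + 1 ≠ a := by omega
  have hb1a1 : b + 1 ≠ a + 1 := by omega
  by_cases h1 : u a < u (a + 1) <;> by_cases h2 : u b < u (b + 1)
  · rw [hstep_of_lt h1, hstep_of_lt h2,
      hstep_of_lt (by rw [mul_swap_apply_of_ne u a b hba hba1,
        mul_swap_apply_of_ne u a (b+1) hb1a hb1a1]; exact h2),
      hstep_of_lt (by rw [mul_swap_apply_of_ne u b a hba.symm hb1a.symm,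
        mul_swap_apply_of_ne u b (a+1) hba1.symm hb1a1.symm]; exact h1),
      mul_assoc, mul_assoc, swap_succ_comm a b h]
  · rw [hstep_of_lt h1, hstep_of_ge h2,
      hstep_of_ge (by rw [mul_swap_apply_of_ne u a b hba hba1,
        mul_swap_apply_of_ne u a (b+1) hb1a hb1a1]; exact h2),
      hstep_of_lt h1]
  · rw [hstep_of_ge h1, hstep_of_lt h2,
      hstep_of_ge (by rw [mul_swap_apply_of_ne u b a hba.symm hb1a.symm,
        mul_swap_apply_of_ne u b (a+1) hba1.symm hb1a1.symm]; exact h1)]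
  · rw [hstep_of_ge h1, hstep_of_ge h2, hstep_of_ge h1]

lemma hf_move (l : List ℕ) (u : Equiv.Perm ℕ) (x : ℕ)
    (h : ∀ a ∈ l, a + 2 ≤ x ∨ x + 2 ≤ a) :
    hf u (l ++ [x]) = hf u (x :: l) := by
  induction l generalizing u with
  | nil => rfl
  | cons a l ih =>
      have key : hf (hstep u a) (l ++ [x]) = hf (hstep u a) (x :: l) :=
        ih _ (fun b hb => h b (by simp [hb]))
      simp only [List.cons_append, hf_cons] at key ⊢
      rw [key, hstep_comm u a x (by rcases h a (by simp) with h' | h' <;> omega)]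

lemma hf_block_swap (l₁ l₂ : List ℕ) (u : Equiv.Perm ℕ)
    (h : ∀ a ∈ l₁, ∀ b ∈ l₂, b + 2 ≤ a ∨ a + 2 ≤ b) :
    hf u (l₁ ++ l₂) = hf u (l₂ ++ l₁) := by
  induction l₂ generalizing u l₁ with
  | nil => simp
  | cons x l₂ ih =>
      calc hf u (l₁ ++ x :: l₂) = hf u ((l₁ ++ [x]) ++ l₂) := by simp
        _ = hf (hf u (l₁ ++ [x])) l₂ := hf_append ..
        _ = hf (hf u (x :: l₁)) l₂ := by
              rw [hf_move l₁ u x (fun a ha => (h a ha x (by simp)).symm)]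
        _ = hf (hstep u x) (l₁ ++ l₂) := by rw [hf_cons, ← hf_append]
        _ = hf (hstep u x) (l₂ ++ l₁) :=
              ih l₁ _ (fun a ha b hb => h a ha b (by simp [hb]))
        _ = hf u ((x :: l₂) ++ l₁) := by rw [List.cons_append, hf_cons]

lemma hf_block_swap_middle (pre l₁ l₂ suf : List ℕ) (u : Equiv.Perm ℕ)
    (h : ∀ a ∈ l₁, ∀ b ∈ l₂, b + 2 ≤ a ∨ a + 2 ≤ b) :
    hf u (pre ++ (l₁ ++ (l₂ ++ suf))) = hf u (pre ++ (l₂ ++ (l₁ ++ suf))) := by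
  have e1 : pre ++ (l₁ ++ (l₂ ++ suf)) = (pre ++ (l₁ ++ l₂)) ++ suf := by simp
  have e2 : pre ++ (l₂ ++ (l₁ ++ suf)) = (pre ++ (l₂ ++ l₁)) ++ suf := by simp
  rw [e1, e2, hf_append u (pre ++ (l₁ ++ l₂)) suf, hf_append u (pre ++ (l₂ ++ l₁)) suf,
    hf_append u pre, hf_append u pre, hf_block_swap l₁ l₂ (hf u pre) h]

/-- left 0-Hecke step -/
def lstep (a : ℕ) (u : Equiv.Perm ℕ) : Equiv.Perm ℕ :=
  if u.symm a < u.symm (a + 1) then Equiv.swap a (a + 1) * u else u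

lemma lstep_of_lt {u : Equiv.Perm ℕ} {a : ℕ} (h : u.symm a < u.symm (a + 1)) :
    lstep a u = Equiv.swap a (a + 1) * u := if_pos h

lemma lstep_of_ge {u : Equiv.Perm ℕ} {a : ℕ} (h : ¬ u.symm a < u.symm (a + 1)) :
    lstep a u = u := if_neg h

lemma swap_succ_lt (a x y : ℕ) (hxy : x < y) (hp : ¬ (x = a ∧ y = a + 1)) :
    Equiv.swap a (a + 1) x < Equiv.swap a (a + 1) y := by
  simp only [Equiv.swap_apply_def]
  split_ifs <;> omega

lemma swap_cross (u : Equiv.Perm ℕ) (a b : ℕ) (h1 : u b = a) (h2 : u (b + 1) = a + 1) :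
    Equiv.swap a (a + 1) * u = u * Equiv.swap b (b + 1) := by
  ext x
  by_cases hx : x = b
  · simp [hx, Equiv.Perm.mul_apply, h1, h2, Equiv.swap_apply_def]
  · by_cases hx1 : x = b + 1
    · simp [hx1, Equiv.Perm.mul_apply, h1, h2, Equiv.swap_apply_def]
    · have hne : u x ≠ a := fun hc => hx (u.injective (hc.trans h1.symm))
      have hne1 : u x ≠ a + 1 := fun hc => hx1 (u.injective (hc.trans h2.symm))
      simp [Equiv.Perm.mul_apply, Equiv.swap_apply_of_ne_of_ne hne hne1,
        Equiv.swap_apply_of_ne_of_ne hx hx1]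

lemma mul_swap_symm_apply (u : Equiv.Perm ℕ) (b x : ℕ) :
    (u * Equiv.swap b (b + 1)).symm x = Equiv.swap b (b + 1) (u.symm x) := by
  rfl

lemma lstep_hstep (a b : ℕ) (u : Equiv.Perm ℕ) :
    hstep (lstep a u) b = lstep a (hstep u b) := by
  by_cases h2 : u b < u (b + 1)
  · rw [hstep_of_lt h2]
    by_cases h1 : u.symm a < u.symm (a + 1)
    · rw [lstep_of_lt h1]
      by_cases hb : u b = a ∧ u (b + 1) = a + 1
      · have hsa : u.symm a = b := by rw [← hb.1, Equiv.symm_apply_apply]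
        have hsa1 : u.symm (a + 1) = b + 1 := by rw [← hb.2, Equiv.symm_apply_apply]
        have hc1 : ¬ ((Equiv.swap a (a+1) * u) b < (Equiv.swap a (a+1) * u) (b+1)) := by
          simp [Equiv.Perm.mul_apply, hb.1, hb.2]
        have hc2 : ¬ ((u * Equiv.swap b (b+1)).symm a < (u * Equiv.swap b (b+1)).symm (a+1)) := by
          rw [mul_swap_symm_apply, mul_swap_symm_apply, hsa, hsa1]
          simp [Equiv.swap_apply_def]
        rw [hstep_of_ge hc1, lstep_of_ge hc2, swap_cross u a b hb.1 hb.2]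
      · have hc1 : (Equiv.swap a (a+1) * u) b < (Equiv.swap a (a+1) * u) (b+1) := by
          simp only [Equiv.Perm.mul_apply]
          exact swap_succ_lt a _ _ h2 hb
        have hc2 : (u * Equiv.swap b (b+1)).symm a < (u * Equiv.swap b (b+1)).symm (a+1) := by
          rw [mul_swap_symm_apply, mul_swap_symm_apply]
          refine swap_succ_lt b _ _ h1 (fun hp => hb ?_)
          constructor
          · rw [← hp.1, Equiv.apply_symm_apply]
          · rw [← hp.2, Equiv.apply_symm_apply]
        rw [hstep_of_lt hc1, lstep_of_lt hc2, mul_assoc]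
    · have hc2 : ¬ ((u * Equiv.swap b (b+1)).symm a < (u * Equiv.swap b (b+1)).symm (a+1)) := by
        rw [mul_swap_symm_apply, mul_swap_symm_apply]
        intro hlt
        have hne : u.symm a ≠ u.symm (a + 1) := by
          intro hc; exact absurd (u.symm.injective hc) (by omega)
        have h1' : u.symm (a + 1) < u.symm a := by
          rcases lt_or_ge (u.symm a) (u.symm (a+1)) with h' | h'
          · exact absurd h' h1
          · omega
        have := swap_succ_lt b _ _ h1' (fun hp => by
          have e1 : u b = a + 1 := by rw [← hp.1, Equiv.apply_symm_apply]
          have e2 : u (b + 1) = a := by rw [← hp.2, Equiv.apply_symm_apply]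
          omega)
        omega
      rw [lstep_of_ge h1, hstep_of_lt h2, lstep_of_ge hc2]
  · rw [hstep_of_ge h2]
    by_cases h1 : u.symm a < u.symm (a + 1)
    · rw [lstep_of_lt h1]
      have hc1 : ¬ ((Equiv.swap a (a+1) * u) b < (Equiv.swap a (a+1) * u) (b+1)) := by
        simp only [Equiv.Perm.mul_apply]
        intro hlt
        have hbb : u b ≠ u (b + 1) := by
          intro hc; exact absurd (u.injective hc) (by omega)
        have h2' : u (b + 1) < u b := by omega
        have := swap_succ_lt a _ _ h2' (fun hp => by
          have e1 : u.symm a = b + 1 := by rw [← hp.1, Equiv.symm_apply_apply]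
          have e2 : u.symm (a + 1) = b := by rw [← hp.2, Equiv.symm_apply_apply]
          omega)
        omega
      rw [hstep_of_ge hc1]
    · rw [lstep_of_ge h1, hstep_of_ge h2]

lemma hword_append_single (l : List ℕ) (a : ℕ) :
    hword (l ++ [a]) = hstep (hword l) a := by
  rw [hword_def, hword_def, hf_append, hf_singleton]

lemma hword_cons (a : ℕ) (l : List ℕ) : hword (a :: l) = lstep a (hword l) := by
  induction l using List.reverseRecOn with
  | nil =>
      show hword [a] = lstep a (hword [])
      have h1 : hword [a] = hstep 1 a := rfl
      have h0 : hword ([] : List ℕ) = 1 := rfl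
      rw [h1, h0]
      unfold hstep lstep
      norm_num
      exact Nat.lt_succ_self a
  | append_singleton l b ih =>
      have : a :: (l ++ [b]) = (a :: l) ++ [b] := rfl
      rw [this, hword_append_single, hword_append_single, ih, lstep_hstep]

lemma hstep_inv (u : Equiv.Perm ℕ) (a : ℕ) : hstep u⁻¹ a = (lstep a u)⁻¹ := by
  unfold hstep lstep
  have : ∀ x, u⁻¹ x = u.symm x := fun x => rfl
  by_cases h : u.symm a < u.symm (a + 1)
  · rw [if_pos (by rw [this, this]; exact h), if_pos h, mul_inv_rev, Equiv.swap_inv]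
  · rw [if_neg (by rw [this, this]; exact h), if_neg h]

lemma hword_reverse (l : List ℕ) : hword l.reverse = (hword l)⁻¹ := by
  induction l with
  | nil => simp [hword, hword_def]
  | cons a l ih =>
      rw [List.reverse_cons, hword_append_single, ih, hword_cons, hstep_inv]

/-- replacing a factor with one of equal Demazure product -/
lemma hword_congr_right {l l' : List ℕ} (x : List ℕ) (h : hword l = hword l') :
    hword (x ++ l) = hword (x ++ l') := by
  have key : ∀ y : List ℕ, hword (x ++ y) = (hf (hword y)⁻¹ x.reverse)⁻¹ := by
    intro y
    have := hword_reverse (x ++ y)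
    rw [List.reverse_append] at this
    rw [← inv_inv (hword (x ++ y)), ← this, hword_def, hf_append, ← hword_def, hword_reverse]
  rw [key l, key l', h]

lemma hword_append (p q : List ℕ) : hword (p ++ q) = hf (hword p) q := by
  rw [hword_def, hf_append, hword_def]

lemma hword_congr_middle {l l' : List ℕ} (x y : List ℕ) (h : hword l = hword l') :
    hword (x ++ l ++ y) = hword (x ++ l' ++ y) := by
  calc hword (x ++ l ++ y) = hf (hword (x ++ l)) y := hword_append ..
    _ = hf (hword (x ++ l')) y := by rw [hword_congr_right x h]
    _ = hword (x ++ l' ++ y) := (hword_append ..).symm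

end PNproof

section PNproof2

open List

/-! #### Shift and complement conjugation -/

lemma shiftPerm_apply (p : ℕ) (v : Equiv.Perm ℕ) (i : ℕ) :
    shiftPerm p v i = if i < p then i else v (i - p) + p := rfl

lemma shiftPerm_one (p : ℕ) : shiftPerm p 1 = 1 := by
  ext i
  rw [shiftPerm_apply]
  split_ifs <;> simp <;> omega

lemma shiftPerm_mul (p : ℕ) (u v : Equiv.Perm ℕ) :
    shiftPerm p (u * v) = shiftPerm p u * shiftPerm p v := by
  ext i
  simp only [Equiv.Perm.mul_apply, shiftPerm_apply]
  split_ifs with h1 h2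
  · rfl
  · omega
  · rw [Nat.add_sub_cancel]

lemma shiftPerm_swap (p a : ℕ) :
    shiftPerm p (Equiv.swap a (a + 1)) = Equiv.swap (a + p) (a + p + 1) := by
  ext i
  rw [shiftPerm_apply]
  simp only [Equiv.swap_apply_def]
  split_ifs <;> omega

lemma hstep_shift (p a : ℕ) (u : Equiv.Perm ℕ) :
    hstep (shiftPerm p u) (a + p) = shiftPerm p (hstep u a) := by
  have e1 : shiftPerm p u (a + p) = u a + p := by
    rw [shiftPerm_apply, if_neg (by omega), Nat.add_sub_cancel]
  have e2 : shiftPerm p u (a + p + 1) = u (a + 1) + p := by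
    rw [shiftPerm_apply, if_neg (by omega)]
    congr 2
    omega
  by_cases h : u a < u (a + 1)
  · rw [hstep_of_lt (by rw [e1, e2]; omega), hstep_of_lt h, shiftPerm_mul, shiftPerm_swap]
  · rw [hstep_of_ge (by rw [e1, e2]; omega), hstep_of_ge h]

lemma hf_map_shift (p : ℕ) (l : List ℕ) (u : Equiv.Perm ℕ) :
    hf (shiftPerm p u) (l.map (· + p)) = shiftPerm p (hf u l) := by
  induction l generalizing u with
  | nil => rfl
  | cons a l ih => rw [List.map_cons, hf_cons, hf_cons, hstep_shift, ih]

lemma hword_map_shift (p : ℕ) (l : List ℕ) :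
    hword (l.map (· + p)) = shiftPerm p (hword l) := by
  rw [hword_def, hword_def, ← hf_map_shift, shiftPerm_one]

lemma w0p_apply (m x : ℕ) : w0p m x = if x < m then m - 1 - x else x := rfl

lemma w0p_mul_self (m : ℕ) : w0p m * w0p m = 1 := by
  ext x
  simp only [Equiv.Perm.mul_apply, w0p_apply, Equiv.Perm.one_apply]
  split_ifs <;> omega

lemma w0p_conj_swap (m a : ℕ) (h : a + 2 ≤ m) :
    Equiv.swap (m - 2 - a) (m - 2 - a + 1) = w0p m * Equiv.swap a (a + 1) * w0p m := by
  ext x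
  simp only [Equiv.Perm.mul_apply, w0p_apply, Equiv.swap_apply_def]
  split_ifs <;> omega

lemma hstep_compl (m a : ℕ) (h : a + 2 ≤ m) (u : Equiv.Perm ℕ)
    (hu : ∀ x, x < m → u x < m) :
    hstep (w0p m * u * w0p m) (m - 2 - a) = w0p m * hstep u a * w0p m := by
  have e0 : w0p m (m - 2 - a) = a + 1 := by rw [w0p_apply, if_pos (by omega)]; omega
  have e0' : w0p m (m - 2 - a + 1) = a := by rw [w0p_apply, if_pos (by omega)]; omega
  have e1 : (w0p m * u * w0p m) (m - 2 - a) = m - 1 - u (a + 1) := by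
    simp only [Equiv.Perm.mul_apply, e0]
    rw [w0p_apply, if_pos (hu _ (by omega))]
  have e2 : (w0p m * u * w0p m) (m - 2 - a + 1) = m - 1 - u a := by
    simp only [Equiv.Perm.mul_apply, e0']
    rw [w0p_apply, if_pos (hu _ (by omega))]
  have hne : u a ≠ u (a + 1) := fun hc => absurd (u.injective hc) (by omega)
  have hua : u a < m := hu _ (by omega)
  have hua1 : u (a + 1) < m := hu _ (by omega)
  by_cases hc : u a < u (a + 1)
  · rw [hstep_of_lt (by rw [e1, e2]; omega), hstep_of_lt hc, w0p_conj_swap m a h,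
      show w0p m * u * w0p m * (w0p m * Equiv.swap a (a + 1) * w0p m)
          = w0p m * u * ((w0p m * w0p m) * (Equiv.swap a (a + 1) * w0p m)) by
        simp only [mul_assoc],
      w0p_mul_self, one_mul]
    simp only [mul_assoc]
  · rw [hstep_of_ge (by rw [e1, e2]; omega), hstep_of_ge hc]

lemma hstep_bound (m a : ℕ) (u : Equiv.Perm ℕ) (hu : ∀ x, x < m → u x < m)
    (ha : a + 2 ≤ m) : ∀ x, x < m → hstep u a x < m := by
  intro x hx
  unfold hstep
  split_ifs with h
  · simp only [Equiv.Perm.mul_apply]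
    rcases Nat.lt_trichotomy x a with h' | h' | h'
    · rw [Equiv.swap_apply_of_ne_of_ne (by omega) (by omega)]; exact hu _ hx
    · rw [h', Equiv.swap_apply_left]; exact hu _ (by omega)
    · by_cases h'' : x = a + 1
      · rw [h'', Equiv.swap_apply_right]; exact hu _ (by omega)
      · rw [Equiv.swap_apply_of_ne_of_ne (by omega) (by omega)]; exact hu _ hx
  · exact hu _ hx

lemma hf_map_compl (m : ℕ) (l : List ℕ) (u : Equiv.Perm ℕ)
    (hl : ∀ a ∈ l, a + 2 ≤ m) (hu : ∀ x, x < m → u x < m) :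
    hf (w0p m * u * w0p m) (l.map (fun a => m - 2 - a)) = w0p m * hf u l * w0p m := by
  induction l generalizing u with
  | nil => rfl
  | cons a l ih =>
      rw [List.map_cons, hf_cons, hf_cons, hstep_compl m a (hl a (by simp)) u hu,
        ih _ (fun b hb => hl b (by simp [hb])) (hstep_bound m a u hu (hl a (by simp)))]

lemma hword_map_compl (m : ℕ) (l : List ℕ) (hl : ∀ a ∈ l, a + 2 ≤ m) :
    hword (l.map (fun a => m - 2 - a)) = w0p m * hword l * w0p m := by
  have h1 : w0p m * (1 : Equiv.Perm ℕ) * w0p m = 1 := by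
    rw [mul_one, w0p_mul_self]
  rw [hword_def, hword_def, ← hf_map_compl m l 1 hl (fun x hx => hx), h1]

/-! #### positions fixed by folds -/

lemma hf_apply_of_gt (l : List ℕ) (u : Equiv.Perm ℕ) (x : ℕ) (h : ∀ a ∈ l, a + 1 < x) :
    hf u l x = u x := by
  induction l generalizing u with
  | nil => rfl
  | cons a l ih =>
      have hx : a + 1 < x := h a (by simp)
      rw [hf_cons, ih _ (fun b hb => h b (by simp [hb])),
        hstep_apply_of_ne u a x (by omega) (by omega)]

lemma hf_fix_lt (l : List ℕ) (u : Equiv.Perm ℕ) (g : ℕ) (hl : ∀ a ∈ l, g ≤ a)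
    (hu : ∀ x, x < g → u x = x) : ∀ x, x < g → hf u l x = x := by
  induction l generalizing u with
  | nil => exact hu
  | cons a l ih =>
      intro x hx
      refine ih _ (fun b hb => hl b (by simp [hb])) ?_ x hx
      intro y hy
      rw [hstep_apply_of_ne u a y (by have := hl a (by simp); omega)
        (by have := hl a (by simp); omega), hu y hy]

lemma hf_fix_ge (l : List ℕ) (u : Equiv.Perm ℕ) (m : ℕ) (hl : ∀ a ∈ l, a + 1 < m)
    (hu : ∀ x, m ≤ x → u x = x) : ∀ x, m ≤ x → hf u l x = x := by
  induction l generalizing u with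
  | nil => exact hu
  | cons a l ih =>
      intro x hx
      refine ih _ (fun b hb => hl b (by simp [hb])) ?_ x hx
      intro y hy
      rw [hstep_apply_of_ne u a y (by have := hl a (by simp); omega)
        (by have := hl a (by simp); omega), hu y hy]

/-! #### descending consecutive runs -/

/-- the descending consecutive run `[b+t-1, …, b]` -/
def drun (b t : ℕ) : List ℕ := (List.range t).reverse.map (· + b)

@[simp] lemma drun_zero (b : ℕ) : drun b 0 = [] := rfl

lemma drun_succ (b t : ℕ) : drun b (t + 1) = (b + t) :: drun b t := by
  unfold drun
  rw [List.range_succ, List.reverse_append]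
  simp [Nat.add_comm]

lemma mem_drun {b t x : ℕ} (h : x ∈ drun b t) : b ≤ x ∧ x < b + t := by
  unfold drun at h
  simp only [List.mem_map, List.mem_reverse, List.mem_range] at h
  obtain ⟨j, hj, rfl⟩ := h
  omega

lemma run_asc (t : ℕ) (v : Equiv.Perm ℕ) (b : ℕ)
    (h : ∀ j < t, v (b + j) < v (b + t)) :
    hf v (drun b t) b = v (b + t) ∧ ∀ j < t, hf v (drun b t) (b + 1 + j) = v (b + j) := by
  induction t generalizing v with
  | zero => simp
  | succ t ih =>
      rw [drun_succ, hf_cons]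
      have hasc : v (b + t) < v (b + t + 1) := by
        have := h t (by omega); rwa [show b + (t+1) = b + t + 1 by omega] at this
      rw [hstep_of_lt hasc]
      set v₁ := v * Equiv.swap (b + t) (b + t + 1) with hv₁
      have hv1a : ∀ j < t, v₁ (b + j) = v (b + j) := fun j hj =>
        mul_swap_apply_of_ne v (b + t) (b + j) (by omega) (by omega)
      have hv1b : v₁ (b + t) = v (b + t + 1) := by
        rw [hv₁, Equiv.Perm.mul_apply, Equiv.swap_apply_left]
      have hv1c : v₁ (b + t + 1) = v (b + t) := by
        rw [hv₁, Equiv.Perm.mul_apply, Equiv.swap_apply_right]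
      have ihh := ih v₁ (fun j hj => by
        rw [hv1a j hj, hv1b]
        have := h j (by omega)
        have ht := h t (by omega)
        have e : b + (t + 1) = b + t + 1 := by omega
        rw [e] at this ht
        omega)
      constructor
      · rw [ihh.1, hv1b]; congr 1
      · intro j hj
        rcases Nat.lt_or_ge j t with hjt | hjt
        · rw [ihh.2 j hjt, hv1a j hjt]
        · have hjeq : j = t := by omega
          subst hjeq
          rw [show b + 1 + j = b + j + 1 by omega,
            hf_apply_of_gt _ _ _ (fun a ha => by have := mem_drun ha; omega), hv1c]

end PNproof2

section PNproof3

open List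

/-- word of the crossed cells of row `r` in columns `[a,b)`, read right to left -/
def rowW (P : Finset (ℕ × ℕ)) (r a b : ℕ) : List ℕ :=
  (List.range' a (b - a)).reverse.filterMap fun j => if (r, j) ∈ P then some (r + j) else none

lemma mem_rowW {P : Finset (ℕ × ℕ)} {r a b x : ℕ} (h : x ∈ rowW P r a b) :
    ∃ j, (r, j) ∈ P ∧ a ≤ j ∧ j < a + (b - a) ∧ x = r + j := by
  unfold rowW at h
  rw [List.mem_filterMap] at h
  obtain ⟨j, hj, hx⟩ := h
  rw [List.mem_reverse, List.mem_range'_1] at hj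
  by_cases hm : (r, j) ∈ P
  · rw [if_pos hm, Option.some_inj] at hx
    exact ⟨j, hm, hj.1, hj.2, hx.symm⟩
  · rw [if_neg hm] at hx; cases hx

lemma rowW_split (P : Finset (ℕ × ℕ)) (r : ℕ) {a b c : ℕ} (hab : a ≤ b) (hbc : b ≤ c) :
    rowW P r a c = rowW P r b c ++ rowW P r a b := by
  unfold rowW
  have e : List.range' a (c - a) = List.range' a (b - a) ++ List.range' b (c - b) := by
    have h := List.range'_append (s := a) (m := b - a) (n := c - b) (step := 1)
    simp only [one_mul] at h
    rw [show a + (b - a) = b by omega] at h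
    rw [show c - a = b - a + (c - b) by omega]
    exact h.symm
  rw [e, List.reverse_append, List.filterMap_append]

lemma rowW_empty (P : Finset (ℕ × ℕ)) (r a b : ℕ)
    (h : ∀ j, a ≤ j → j < b → (r, j) ∉ P) : rowW P r a b = [] := by
  unfold rowW
  rw [List.filterMap_eq_nil_iff]
  intro j hj
  rw [List.mem_reverse, List.mem_range'_1] at hj
  rw [if_neg (h j hj.1 (by omega))]

lemma rowW_single (P : Finset (ℕ × ℕ)) (r u : ℕ) :
    rowW P r u (u + 1) = if (r, u) ∈ P then [r + u] else [] := by
  unfold rowW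
  rw [show u + 1 - u = 1 by omega, List.range'_one]
  simp only [List.reverse_cons, List.reverse_nil, List.nil_append, List.filterMap_cons]
  split_ifs <;> simp

lemma rowW_full (P : Finset (ℕ × ℕ)) (r : ℕ) {a b : ℕ} (hab : a ≤ b)
    (h : ∀ j, a ≤ j → j < b → (r, j) ∈ P) : rowW P r a b = drun (r + a) (b - a) := by
  obtain ⟨t, rfl⟩ : ∃ t, b = a + t := ⟨b - a, by omega⟩
  induction t with
  | zero => simp [rowW_empty P r a a (by omega)]
  | succ t ih =>
      rw [rowW_split P r (show a ≤ a + t by omega) (show a + t ≤ a + (t+1) by omega),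
        show a + (t + 1) = (a + t) + 1 by omega, rowW_single,
        if_pos (h (a + t) (by omega) (by omega)),
        ih (by omega) (fun j h1 h2 => h j h1 (by omega)),
        show a + t + 1 - a = t + 1 by omega, show a + t - a = t by omega,
        drun_succ]
      simp [show r + a + t = r + (a + t) by omega]

/-- word of rows `[s, s+m)` -/
def rowsW (P : Finset (ℕ × ℕ)) (L s m : ℕ) : List ℕ :=
  (List.range' s m).flatMap fun i => rowW P i 0 L

lemma rowsW_succ (P : Finset (ℕ × ℕ)) (L s m : ℕ) :
    rowsW P L s (m + 1) = rowsW P L s m ++ rowW P (s + m) 0 L := by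
  unfold rowsW
  have h := List.range'_append (s := s) (m := m) (n := 1) (step := 1)
  simp only [one_mul, List.range'_one] at h
  rw [← h, List.flatMap_append]
  simp

lemma rowsW_append (P : Finset (ℕ × ℕ)) (L s m n : ℕ) :
    rowsW P L s (m + n) = rowsW P L s m ++ rowsW P L (s + m) n := by
  unfold rowsW
  have h := List.range'_append (s := s) (m := m) (n := n) (step := 1)
  simp only [one_mul] at h
  rw [← h, List.flatMap_append]

lemma mem_rowsW {P : Finset (ℕ × ℕ)} {L s m x : ℕ} (h : x ∈ rowsW P L s m) :
    ∃ i j, (i, j) ∈ P ∧ s ≤ i ∧ i < s + m ∧ x = i + j := by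
  unfold rowsW at h
  rw [List.mem_flatMap] at h
  obtain ⟨i, hi, hx⟩ := h
  rw [List.mem_range'_1] at hi
  obtain ⟨j, hj, _, _, rfl⟩ := mem_rowW hx
  exact ⟨i, j, hj, hi.1, hi.2, rfl⟩

lemma rowsW_nil (P : Finset (ℕ × ℕ)) (L s m : ℕ)
    (h : ∀ i, s ≤ i → i < s + m → ∀ j, (i, j) ∉ P) : rowsW P L s m = [] := by
  induction m with
  | zero => rfl
  | succ m ih =>
      rw [rowsW_succ, ih (fun i h1 h2 j => h i h1 (by omega) j),
        rowW_empty P (s + m) 0 L (fun j _ _ => h (s + m) (by omega) (by omega) j)]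
      rfl

lemma pipeWord_eq_rowsW (K L : ℕ) (P : Finset (ℕ × ℕ)) :
    pipeWord K L P = rowsW P L 0 K := by
  unfold pipeWord rowsW rowW
  simp only [List.range_eq_range', Nat.sub_zero]

/-- **The master forcing lemma.** -/
lemma forcing_master (P : Finset (ℕ × ℕ)) (K L R0 R1 g : ℕ) (c : ℕ → ℕ)
    (hP : ∀ p ∈ P, (R0 ≤ p.1 ∧ p.1 < R1) ∧ (g ≤ p.2 ∧ p.2 < L))
    (hR1 : R1 ≤ K)
    (hmono : ∀ s s', R0 ≤ s → s ≤ s' → s' < R1 → c s' ≤ c s)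
    (hcL : ∀ s, R0 ≤ s → s < R1 → g ≤ c s ∧ c s ≤ L)
    (hval : ∀ s, R0 ≤ s → s < R1 → R0 + c s ≤ hword (pipeWord K L P) (s + g)) :
    ∀ s j, R0 ≤ s → s < R1 → g ≤ j → j < c s → (s, j) ∈ P := by
  classical
  set u : ℕ → Equiv.Perm ℕ := fun s => hword (rowsW P L 0 s) with hu
  -- the Demazure product of the grid agrees with the partial fold at low positions
  have hdelta : ∀ s, s < R1 → hword (pipeWord K L P) (s + g) = u (s + 1) (s + g) := by
    intro s hs
    rw [pipeWord_eq_rowsW, show K = (s + 1) + (K - (s+1)) by omega, rowsW_append,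
      hword_append]
    refine hf_apply_of_lt _ _ _ (fun a ha => ?_)
    obtain ⟨i, j, hij, hi1, _, rfl⟩ := mem_rowsW ha
    have h1 := (hP _ hij).2.1
    omega
  -- the partial folds fix everything below R0 + g
  have hfixlow : ∀ m w, w ∈ rowsW P L 0 m ++ rowW P m (c m) L → R0 + g ≤ w := by
    intro m w hw
    rcases List.mem_append.mp hw with hw | hw
    · obtain ⟨i, j, hij, _, _, rfl⟩ := mem_rowsW hw
      have h1 := (hP _ hij).1.1
      have h2 := (hP _ hij).2.1
      omega
    · obtain ⟨j, hj, _, _, rfl⟩ := mem_rowW hw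
      have h1 := (hP _ hj).1.1
      have h2 := (hP _ hj).2.1
      omega
  -- main induction
  have main : ∀ d, (∀ r j, R0 ≤ r → r < R0 + d → r < R1 → g ≤ j → j < c r → (r, j) ∈ P) ∧
      (R0 + d < R1 → ∀ j, g + j < c (R0 + d) → u (R0 + d) (R0 + d + g + j) = R0 + (g + j)) := by
    intro d
    induction d with
    | zero =>
        constructor
        · intro r j h1 h2; omega
        · intro _ j hj
          have hnil : rowsW P L 0 (R0 + 0) = [] :=
            rowsW_nil P L 0 (R0 + 0) (fun i h1 h2 j hij => by have := (hP _ hij).1.1; omega)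
          show hword (rowsW P L 0 (R0 + 0)) (R0 + 0 + g + j) = R0 + (g + j)
          rw [hnil]
          show (1 : Equiv.Perm ℕ) (R0 + 0 + g + j) = R0 + (g + j)
          simp only [Equiv.Perm.one_apply]
          omega
    | succ d ih =>
        by_cases hsR : R0 + d < R1
        swap
        · constructor
          · intro r j h1 h2 h3 h4 h5
            exact ih.1 r j h1 (by omega) h3 h4 h5
          · intro h; omega
        set s := R0 + d with hs
        have hR0s : R0 ≤ s := by omega
        have hINV : ∀ j, g + j < c s → u s (s + g + j) = R0 + (g + j) := ih.2 hsR
        have hgc := (hcL s hR0s hsR).1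
        have hcLs := (hcL s hR0s hsR).2
        -- decomposition of u (s+1)
        have hdecomp : u (s + 1) = hf (u s) (rowW P s 0 L) := by
          show hword (rowsW P L 0 (s + 1)) = hf (hword (rowsW P L 0 s)) (rowW P s 0 L)
          rw [rowsW_succ, hword_append, Nat.zero_add]
        have hlow : rowW P s 0 L = rowW P s g L := by
          rw [rowW_split P s (Nat.zero_le g) (by omega),
            rowW_empty P s 0 g (fun j _ hj hij => by have := (hP _ hij).2.1; omega),
            List.append_nil]
        -- row s is fully crossed on [g, c s)
        have hforce : ∀ j, g ≤ j → j < c s → (s, j) ∈ P := by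
          by_contra hcon
          push_neg at hcon
          obtain ⟨j₀, hj₀g, hj₀c, hj₀P⟩ := hcon
          have hex : ∃ j, g ≤ j ∧ j < c s ∧ (s, j) ∉ P := ⟨j₀, hj₀g, hj₀c, hj₀P⟩
          set t := Nat.find hex with ht
          have hspec := Nat.find_spec hex
          rw [← ht] at hspec
          obtain ⟨htg, htc, htP⟩ := hspec
          have hbelow : ∀ j, g ≤ j → j < t → (s, j) ∈ P := by
            intro j h1 h2
            by_contra hP'
            exact Nat.find_min hex (show j < Nat.find hex by omega) ⟨h1, by omega, hP'⟩
          have hsplit : rowW P s g L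
              = rowW P s (t + 1) L ++ ([] ++ drun (s + g) (t - g)) := by
            rw [rowW_split P s (show g ≤ t + 1 by omega) (show t + 1 ≤ L by omega)]
            congr 1
            rw [rowW_split P s (show g ≤ t by omega) (show t ≤ t + 1 by omega),
              rowW_single, if_neg htP, rowW_full P s (show g ≤ t by omega) hbelow]
          set v' := hf (u s) (rowW P s (t + 1) L) with hv'
          have hv'val : ∀ j, j ≤ t - g → v' (s + g + j) = R0 + (g + j) := by
            intro j hj
            rw [hv', hf_apply_of_lt _ _ _ (fun a ha => by
              obtain ⟨j', hj', h1, _, rfl⟩ := mem_rowW ha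
              omega)]
            exact hINV j (by omega)
          have hrun := run_asc (t - g) v' (s + g) (fun j hj => by
            rw [hv'val j (by omega), hv'val (t - g) (le_refl _)]
            omega)
          have hvalue : u (s + 1) (s + g) = R0 + t := by
            rw [hdecomp, hlow, hsplit, hf_append, hf_append, ← hv']
            show hf (hf v' []) (drun (s + g) (t - g)) (s + g) = R0 + t
            rw [hf_nil, hrun.1, hv'val (t - g) (le_refl _)]
            omega
          have := hval s hR0s hsR
          rw [hdelta s hsR, hvalue] at this
          omega
        refine ⟨?_, ?_⟩
        · intro r j h1 h2 h3 h4 h5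
          rcases Nat.lt_or_ge r s with hr | hr
          · exact ih.1 r j h1 hr h3 h4 h5
          · have : r = s := by omega
            subst this
            exact hforce j h4 h5
        · -- the invariant at s + 1
          intro hs1R j hj
          rw [show R0 + (d + 1) = s + 1 from by omega] at hs1R hj ⊢
          have hsplit : rowW P s g L = rowW P s (c s) L ++ drun (s + g) (c s - g) := by
            rw [rowW_split P s hgc hcLs, rowW_full P s hgc hforce]
          set v' := hf (u s) (rowW P s (c s) L) with hv'
          have hv'val : ∀ j, g + j < c s → v' (s + g + j) = R0 + (g + j) := by
            intro j hjj
            rw [hv', hf_apply_of_lt _ _ _ (fun a ha => by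
              obtain ⟨j', hj', h1, _, rfl⟩ := mem_rowW ha
              omega)]
            exact hINV j hjj
          have hv'eq : v' = hword (rowsW P L 0 s ++ rowW P s (c s) L) := by
            rw [hword_append, hv']
          have hfix : ∀ x, x < R0 + g → v' x = x := by
            intro x hx
            rw [hv'eq, hword_def]
            exact hf_fix_lt _ _ (R0 + g) (fun a ha => hfixlow s a ha)
              (fun y hy => rfl) x hx
          have hbig : R0 + c s ≤ v' (s + c s) := by
            by_contra hy
            push_neg at hy
            rcases Nat.lt_or_ge (v' (s + c s)) (R0 + g) with hy2 | hy2
            · have := hfix (v' (s + c s)) hy2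
              have heq := v'.injective this
              omega
            · set jj := v' (s + c s) - R0 - g with hjj
              have : v' (s + g + jj) = R0 + (g + jj) := hv'val jj (by omega)
              have heq : v' (s + g + jj) = v' (s + c s) := by rw [this]; omega
              have := v'.injective heq
              omega
          have hrun := run_asc (c s - g) v' (s + g) (fun j hjt => by
            rw [hv'val j (by omega), show s + g + (c s - g) = s + c s by omega]
            omega)
          have hj' : j < c s - g := by
            have := hmono s (s + 1) hR0s (by omega) hs1R
            omega
          rw [hdecomp, hlow, hsplit, hf_append, ← hv',
            show s + 1 + g + j = (s + g) + 1 + j by omega, hrun.2 j hj',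
            hv'val j (by omega)]
  intro s j h1 h2 h3 h4
  exact (main (s + 1 - R0)).1 s j h1 (by omega) h2 h3 h4

end PNproof3

section PNproof4

/-! #### block arithmetic -/

variable (n : ℕ) (dx dy : ℕ → ℕ)

lemma colX_antitone {k k' : ℕ} (h : k ≤ k') : colX n dx k' ≤ colX n dx k :=
  Finset.sum_le_sum_of_subset (by
    intro a ha
    rw [Finset.mem_Icc] at ha ⊢
    omega)

lemma colX_succ {k : ℕ} (h : k < n) : colX n dx k = dx (k + 1) + colX n dx (k + 1) := by
  unfold colX
  rw [show Finset.Icc (k + 1) n = insert (k + 1) (Finset.Icc (k + 2) n) by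
      ext a
      simp only [Finset.mem_Icc, Finset.mem_insert]
      omega,
    Finset.sum_insert (by simp only [Finset.mem_Icc]; omega)]

lemma colX_zero : colX n dx 0 = dX n dx := rfl

lemma colX_of_ge {k : ℕ} (h : n ≤ k) : colX n dx k = 0 := by
  unfold colX
  rw [Finset.Icc_eq_empty (by omega), Finset.sum_empty]

lemma colX_le_dX (k : ℕ) : colX n dx k ≤ dX n dx := colX_antitone n dx (Nat.zero_le k)

lemma rowY_succ (j : ℕ) : rowY dy (j + 1) = rowY dy j + dy j := Finset.sum_range_succ _ _

lemma rowY_mono {j j' : ℕ} (h : j ≤ j') : rowY dy j ≤ rowY dy j' :=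
  Finset.sum_le_sum_of_subset (by simp only [Finset.range_subset_range]; omega)

lemma rowY_last : rowY dy (n + 1) = dY n dy := rfl

lemma rowY_add_le {j : ℕ} (h : j ≤ n) : rowY dy j + dy j ≤ dY n dy := by
  rw [← rowY_succ, ← rowY_last n]
  exact rowY_mono dy (by omega)

/-! #### block index finders -/

/-- the index of the `y` row block containing row `s` (for `s < dY`) -/
def yblk (s : ℕ) : ℕ := Nat.findGreatest (fun j => rowY dy j ≤ s) n

lemma rowY_zero : rowY dy 0 = 0 := rfl

lemma yblk_le (s : ℕ) : yblk n dy s ≤ n := Nat.findGreatest_le n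

lemma yblk_rowY_le (s : ℕ) : rowY dy (yblk n dy s) ≤ s :=
  Nat.findGreatest_spec (P := fun j => rowY dy j ≤ s) (Nat.zero_le n)
    (by show rowY dy 0 ≤ s; rw [rowY_zero]; exact Nat.zero_le s)

lemma yblk_lt {s : ℕ} (h : s < dY n dy) : s < rowY dy (yblk n dy s) + dy (yblk n dy s) := by
  by_contra hc
  push_neg at hc
  rw [← rowY_succ] at hc
  have hle : yblk n dy s + 1 ≤ n := by
    by_contra hn
    push_neg at hn
    have h1 : yblk n dy s = n := by have := yblk_le n dy s; omega
    rw [h1, rowY_last n] at hc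
    omega
  have := Nat.le_findGreatest (P := fun j => rowY dy j ≤ s) hle hc
  unfold yblk at this
  omega

lemma yblk_mono {s s' : ℕ} (h : s ≤ s') : yblk n dy s ≤ yblk n dy s' :=
  Nat.findGreatest_mono (P := fun j => rowY dy j ≤ s) (Q := fun j => rowY dy j ≤ s')
    (fun j hj => le_trans hj h) (le_refl n)

lemma yblk_eq {s k : ℕ} (hk : k ≤ n) (h1 : rowY dy k ≤ s) (h2 : s < rowY dy k + dy k) :
    yblk n dy s = k := by
  have hlb : k ≤ yblk n dy s :=
    Nat.le_findGreatest (P := fun j => rowY dy j ≤ s) hk h1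
  have hub : yblk n dy s ≤ k := by
    by_contra hc
    push_neg at hc
    have hr := rowY_mono dy (show k + 1 ≤ yblk n dy s by omega)
    rw [rowY_succ] at hr
    have := yblk_rowY_le n dy s
    omega
  omega

/-- the index of the `x` block containing column `c` (for `c < dX`) -/
def xblk (c : ℕ) : ℕ :=
  if h : ∃ k, 1 ≤ k ∧ k ≤ n ∧ colX n dx k ≤ c then Nat.find h else 0

lemma xblk_spec {c : ℕ} (h : c < dX n dx) :
    1 ≤ xblk n dx c ∧ xblk n dx c ≤ n ∧ colX n dx (xblk n dx c) ≤ c ∧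
      c < colX n dx (xblk n dx c - 1) := by
  have hn : 1 ≤ n := by
    by_contra hn
    push_neg at hn
    have : n = 0 := by omega
    subst this
    have : dX 0 dx = 0 := by
      unfold dX
      rw [Finset.Icc_eq_empty (by omega), Finset.sum_empty]
    omega
  have hex : ∃ k, 1 ≤ k ∧ k ≤ n ∧ colX n dx k ≤ c := by
    exact ⟨n, hn, le_refl n, by rw [colX_of_ge n dx (le_refl n)]; exact Nat.zero_le c⟩
  have hxb : xblk n dx c = Nat.find hex := by
    unfold xblk
    rw [dif_pos hex]
  obtain ⟨h1, h2, h3⟩ := Nat.find_spec hex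
  refine ⟨by omega, by omega, by rw [hxb]; exact h3, ?_⟩
  rcases Nat.eq_or_lt_of_le h1 with he | hlt
  · rw [hxb, ← he]
    show c < colX n dx (1 - 1)
    rw [colX_zero]
    exact h
  · have hmin := Nat.find_min hex (m := Nat.find hex - 1) (by omega)
    push_neg at hmin
    rw [hxb]
    exact hmin (by omega) (by omega)

/-! #### row and column block membership -/

lemma vertRowBlock_odd {p : ℕ} (hp : p % 2 = 1) :
    vertRowBlock n dx dy p =
      Finset.Ico (rowY dy (n - (p - 1) / 2)) (rowY dy (n - (p - 1) / 2) + dy (n - (p - 1) / 2)) :=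
  if_pos hp

lemma vertRowBlock_even {p : ℕ} (hp : ¬ p % 2 = 1) :
    vertRowBlock n dx dy p =
      Finset.Ico (rowX n dx dy (n - p / 2 + 1)) (rowX n dx dy (n - p / 2 + 1) + dx (n - p / 2 + 1)) :=
  if_neg hp

lemma vertColBlock_odd {p : ℕ} (hp : p % 2 = 1) :
    vertColBlock n dx dy p =
      Finset.Ico (colY n dx dy (n - (p - 1) / 2)) (colY n dx dy (n - (p - 1) / 2) + dy (n - (p - 1) / 2)) :=
  if_pos hp

lemma vertColBlock_even {p : ℕ} (hp : ¬ p % 2 = 1) :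
    vertColBlock n dx dy p =
      Finset.Ico (colX n dx (n - p / 2 + 1)) (colX n dx (n - p / 2 + 1) + dx (n - p / 2 + 1)) :=
  if_neg hp

/-- rows of a `y` block -/
lemma mem_vertRowBlock_y {k i : ℕ} (hk : k ≤ n) (h1 : rowY dy k ≤ i)
    (h2 : i < rowY dy k + dy k) : i ∈ vertRowBlock n dx dy (2 * (n - k) + 1) := by
  rw [vertRowBlock_odd n dx dy (by omega),
    show (2 * (n - k) + 1 - 1) / 2 = n - k by omega, show n - (n - k) = k by omega,
    Finset.mem_Ico]
  exact ⟨h1, h2⟩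

/-- rows of an `x` block -/
lemma mem_vertRowBlock_x {k i : ℕ} (hk1 : 1 ≤ k) (hk2 : k ≤ n)
    (h1 : colX n dx k ≤ i - dY n dy) (h2 : i - dY n dy < colX n dx (k - 1))
    (h3 : dY n dy ≤ i) : i ∈ vertRowBlock n dx dy (2 * (n - k) + 2) := by
  rw [vertRowBlock_even n dx dy (by omega),
    show (2 * (n - k) + 2) / 2 = n - k + 1 by omega,
    show n - (n - k + 1) + 1 = k by omega, Finset.mem_Ico]
  unfold rowX
  have hc : colX n dx k + dx k = colX n dx (k - 1) := by
    have := colX_succ n dx (k := k - 1) (by omega)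
    rw [show k - 1 + 1 = k by omega] at this
    omega
  omega

lemma mem_vertColBlock_y {k c : ℕ} (hk : k ≤ n) (h1 : rowY dy k ≤ c - dX n dx)
    (h2 : c - dX n dx < rowY dy k + dy k) (h3 : dX n dx ≤ c) :
    c ∈ vertColBlock n dx dy (2 * (n - k) + 1) := by
  rw [vertColBlock_odd n dx dy (by omega),
    show (2 * (n - k) + 1 - 1) / 2 = n - k by omega, show n - (n - k) = k by omega,
    Finset.mem_Ico]
  unfold colY
  omega

lemma mem_vertColBlock_x {k c : ℕ} (hk1 : 1 ≤ k) (hk2 : k ≤ n)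
    (h1 : colX n dx k ≤ c) (h2 : c < colX n dx (k - 1)) (h3 : c < dX n dx) :
    c ∈ vertColBlock n dx dy (2 * (n - k) + 2) := by
  rw [vertColBlock_even n dx dy (by omega),
    show (2 * (n - k) + 2) / 2 = n - k + 1 by omega,
    show n - (n - k + 1) + 1 = k by omega, Finset.mem_Ico]
  have hc : colX n dx k + dx k = colX n dx (k - 1) := by
    have := colX_succ n dx (k := k - 1) (by omega)
    rw [show k - 1 + 1 = k by omega] at this
    omega
  omega

end PNproof4

section PNproof5

variable (n : ℕ) (dx dy : ℕ → ℕ)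

/-! #### the row blocks partition the rows -/

lemma rowblock_sub_range {p : ℕ} (hp1 : 1 ≤ p) (hp2 : p ≤ 2 * n + 1) :
    vertRowBlock n dx dy p ⊆ Finset.range (dd n dx dy) := by
  intro i hi
  rw [Finset.mem_range]
  by_cases hp : p % 2 = 1
  · rw [vertRowBlock_odd n dx dy hp, Finset.mem_Ico] at hi
    have h1 := rowY_add_le n dy (j := n - (p - 1) / 2) (by omega)
    have : dY n dy ≤ dd n dx dy := by unfold dd; omega
    omega
  · rw [vertRowBlock_even n dx dy hp, Finset.mem_Ico] at hi
    set k := n - p / 2 + 1 with hk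
    have hk1 : 1 ≤ k := by omega
    have hkn : k ≤ n := by omega
    have hc : colX n dx k + dx k = colX n dx (k - 1) := by
      have := colX_succ n dx (k := k - 1) (by omega)
      rw [show k - 1 + 1 = k by omega] at this
      omega
    have h2 := colX_le_dX n dx (k - 1)
    unfold rowX at hi
    unfold dd
    omega

lemma exists_rowblock {i : ℕ} (h : i < dd n dx dy) :
    ∃ p, 1 ≤ p ∧ p ≤ 2 * n + 1 ∧ i ∈ vertRowBlock n dx dy p := by
  rcases Nat.lt_or_ge i (dY n dy) with hy | hx
  · have hk := yblk_le n dy i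
    have h1 := yblk_rowY_le n dy i
    have h2 := yblk_lt n dy hy
    exact ⟨2 * (n - yblk n dy i) + 1, by omega, by omega,
      mem_vertRowBlock_y n dx dy hk h1 h2⟩
  · have hc : i - dY n dy < dX n dx := by unfold dd at h; omega
    obtain ⟨h1, h2, h3, h4⟩ := xblk_spec n dx hc
    exact ⟨2 * (n - xblk n dx (i - dY n dy)) + 2, by omega, by omega,
      mem_vertRowBlock_x n dx dy h1 h2 h3 h4 hx⟩

lemma rowblock_eq_of_mem {p p' i : ℕ} (hp1 : 1 ≤ p) (hp2 : p ≤ 2 * n + 1)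
    (hp'1 : 1 ≤ p') (hp'2 : p' ≤ 2 * n + 1)
    (hi : i ∈ vertRowBlock n dx dy p) (hi' : i ∈ vertRowBlock n dx dy p') : p = p' := by
  -- characterize membership numerically
  have key : ∀ q, 1 ≤ q → q ≤ 2 * n + 1 → ∀ j, j ∈ vertRowBlock n dx dy q →
      (q % 2 = 1 ∧ rowY dy (n - (q - 1) / 2) ≤ j ∧
        j < rowY dy (n - (q - 1) / 2) + dy (n - (q - 1) / 2) ∧ j < dY n dy) ∨
      (q % 2 = 0 ∧ dY n dy + colX n dx (n - q / 2 + 1) ≤ j ∧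
        j < dY n dy + colX n dx (n - q / 2 + 1 - 1)) := by
    intro q hq1 hq2 j hj
    by_cases hq : q % 2 = 1
    · left
      rw [vertRowBlock_odd n dx dy hq, Finset.mem_Ico] at hj
      have := rowY_add_le n dy (j := n - (q - 1) / 2) (by omega)
      exact ⟨hq, hj.1, hj.2, by omega⟩
    · right
      rw [vertRowBlock_even n dx dy hq, Finset.mem_Ico] at hj
      set k := n - q / 2 + 1 with hk
      have hc : colX n dx k + dx k = colX n dx (k - 1) := by
        have := colX_succ n dx (k := k - 1) (by omega)
        rw [show k - 1 + 1 = k by omega] at this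
        omega
      unfold rowX at hj
      exact ⟨by omega, hj.1, by omega⟩
  have k1 := key p hp1 hp2 i hi
  have k2 := key p' hp'1 hp'2 i hi'
  by_contra hne
  rcases k1 with ⟨ho, ha1, ha2, ha3⟩ | ⟨he, ha1, ha2⟩ <;>
    rcases k2 with ⟨ho', hb1, hb2, hb3⟩ | ⟨he', hb1, hb2⟩
  · -- both odd
    set j := n - (p - 1) / 2
    set j' := n - (p' - 1) / 2
    have hjj : j ≠ j' := by
      intro hc
      apply hne
      omega
    rcases Nat.lt_or_ge j j' with hlt | hge
    · have := rowY_mono dy (show j + 1 ≤ j' by omega)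
      rw [rowY_succ] at this
      omega
    · have hlt : j' < j := by omega
      have := rowY_mono dy (show j' + 1 ≤ j by omega)
      rw [rowY_succ] at this
      omega
  · omega
  · omega
  · -- both even
    set k := n - p / 2 + 1
    set k' := n - p' / 2 + 1
    have hkk : k ≠ k' := by
      intro hc
      apply hne
      omega
    rcases Nat.lt_or_ge k k' with hlt | hge
    · have := colX_antitone n dx (show k ≤ k' - 1 by omega)
      omega
    · have := colX_antitone n dx (show k' ≤ k - 1 by omega)
      omega

lemma rowblock_cover :
    Finset.range (dd n dx dy) = (Finset.Icc 1 (2 * n + 1)).biUnion (vertRowBlock n dx dy) := by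
  ext i
  rw [Finset.mem_biUnion, Finset.mem_range]
  constructor
  · intro h
    obtain ⟨p, h1, h2, h3⟩ := exists_rowblock n dx dy h
    exact ⟨p, Finset.mem_Icc.mpr ⟨h1, h2⟩, h3⟩
  · intro ⟨p, hp, hmem⟩
    rw [Finset.mem_Icc] at hp
    have := rowblock_sub_range n dx dy hp.1 hp.2 hmem
    rwa [Finset.mem_range] at this

/-! #### counting ones -/

lemma perm_lt_of_fixesFrom {m : ℕ} {v : Equiv.Perm ℕ} (hv : fixesFrom m v) :
    ∀ x, x < m → v x < m := by
  intro x hx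
  by_contra hc
  push_neg at hc
  have h1 := hv _ hc
  have h2 := v.injective h1
  omega

lemma onesIn_total {v : Equiv.Perm ℕ} (hv : fixesFrom (dd n dx dy) v)
    {C : Finset ℕ} (hC : C ⊆ Finset.range (dd n dx dy)) :
    ∑ p ∈ Finset.Icc 1 (2 * n + 1), onesIn v (vertRowBlock n dx dy p) C = C.card := by
  unfold onesIn
  rw [← Finset.card_biUnion (fun p hp q hq hne => by
    rw [Finset.mem_coe, Finset.mem_Icc] at hp hq
    refine Finset.disjoint_left.mpr (fun i hi hi' => ?_)
    rw [Finset.mem_filter] at hi hi'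
    exact hne (rowblock_eq_of_mem n dx dy hp.1 hp.2 hq.1 hq.2 hi.1 hi'.1)),
    ← Finset.filter_biUnion, ← rowblock_cover]
  apply Finset.card_bij (fun a _ => v a)
  · intro a ha
    rw [Finset.mem_filter] at ha
    exact ha.2
  · intro a ha b hb hab
    exact v.injective hab
  · intro c hc'
    have hcd : c < dd n dx dy := Finset.mem_range.mp (hC hc')
    refine ⟨v.symm c, ?_, v.apply_symm_apply c⟩
    rw [Finset.mem_filter, Finset.mem_range]
    constructor
    · by_contra h
      push_neg at h
      have h1 := hv _ h
      rw [v.apply_symm_apply] at h1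
      omega
    · rw [v.apply_symm_apply]
      exact hc'

/-! #### path counts -/

lemma compF_diag {m : ℕ} {B : Finset (ℕ × ℕ)} (hB : ∀ q ∈ B, q.1 < m) :
    compF ((Finset.range m).image fun i => (i, i)) B = B := by
  ext ⟨a, b⟩
  unfold compF
  rw [Finset.mem_image]
  constructor
  · rintro ⟨⟨⟨x1, x2⟩, y1, y2⟩, hq, heq⟩
    rw [Finset.mem_filter, Finset.mem_product] at hq
    obtain ⟨⟨hq1, hq2⟩, hq3⟩ := hq
    obtain ⟨i, _, hieq⟩ := Finset.mem_image.mp hq1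
    simp only [Prod.mk.injEq] at hieq heq
    simp only at hq3
    have hy : y1 = a ∧ y2 = b := by omega
    rw [show ((a : ℕ), (b : ℕ)) = (y1, y2) by simp only [Prod.mk.injEq]; omega]
    exact hq2
  · intro hab
    refine ⟨((a, a), (a, b)), ?_, rfl⟩
    rw [Finset.mem_filter, Finset.mem_product]
    refine ⟨⟨?_, hab⟩, rfl⟩
    rw [Finset.mem_image]
    exact ⟨a, Finset.mem_range.mpr (hB _ hab), rfl⟩

lemma matchingAt_bound (L : LaceData) (hL : IsLacingDiagram n dx dy L) {p : ℕ}
    (hp1 : 1 ≤ p) (hp2 : p ≤ 2 * n) :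
    ∀ q ∈ matchingAt n dx dy L p, q.1 < colSize n dx dy p := by
  intro q hq
  unfold matchingAt at hq
  unfold colSize
  by_cases hp : p % 2 = 1
  · rw [if_pos hp] at hq ⊢
    set k := n - (p - 1) / 2 with hk
    have hk1 : 1 ≤ k := by omega
    have hk2 : k ≤ n := by omega
    have := ((hL.1 k hk1 hk2).1.1 q hq).1
    exact this
  · rw [if_neg hp] at hq ⊢
    set k := n - p / 2 + 1 with hk
    have hk1 : 1 ≤ k := by omega
    have hk2 : k ≤ n := by omega
    unfold transposeF at hq
    obtain ⟨r, hr, hrq⟩ := Finset.mem_image.mp hq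
    have := ((hL.1 k hk1 hk2).2.1 r hr).2
    rw [← hrq]
    exact this

lemma pathCount_diag {q : ℕ} (hq1 : 1 ≤ q) (hq2 : q ≤ 2 * n + 1) (L : LaceData) :
    pathCount n dx dy L q q = colSize n dx dy q := by
  unfold pathCount
  rw [if_pos ⟨hq1, le_refl q, hq2⟩, Nat.sub_self]
  show (((Finset.range (colSize n dx dy q)).image fun i => (i, i)).card) = _
  rw [Finset.card_image_of_injective _ (fun a b hab => (Prod.mk.injEq _ _ _ _ ▸ hab).1),
    Finset.card_range]

lemma pathCount_one {q : ℕ} (hq1 : 1 ≤ q) (hq2 : q + 1 ≤ 2 * n + 1) (L : LaceData)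
    (hL : IsLacingDiagram n dx dy L) :
    pathCount n dx dy L q (q + 1) = (matchingAt n dx dy L q).card := by
  unfold pathCount
  rw [if_pos ⟨hq1, by omega, hq2⟩, Nat.add_sub_cancel_left]
  show (compF (pathF n dx dy L q 0) (matchingAt n dx dy L (q + 0))).card = _
  rw [Nat.add_zero]
  show (compF ((Finset.range (colSize n dx dy q)).image fun i => (i, i))
    (matchingAt n dx dy L q)).card = _
  rw [compF_diag (matchingAt_bound n dx dy L hL hq1 (by omega))]

lemma pathCount_zero_left (L : LaceData) (v : ℕ) : pathCount n dx dy L 0 v = 0 := by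
  unfold pathCount
  rw [if_neg (by omega)]

lemma pathCount_zero_right (L : LaceData) (u : ℕ) : pathCount n dx dy L u (2 * n + 2) = 0 := by
  unfold pathCount
  rw [if_neg (by omega)]

lemma tele_sum (f : ℕ → ℤ) (q : ℕ) :
    ∑ u ∈ Finset.Icc 1 q, (f u - f (u - 1)) = f q - f 0 := by
  induction q with
  | zero => rw [Finset.Icc_eq_empty (by omega), Finset.sum_empty]; ring
  | succ q ih =>
      rw [show Finset.Icc 1 (q + 1) = insert (q + 1) (Finset.Icc 1 q) by
          ext a
          simp only [Finset.mem_Icc, Finset.mem_insert]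
          omega,
        Finset.sum_insert (by simp only [Finset.mem_Icc]; omega), ih]
      simp only [Nat.add_sub_cancel]
      ring

/-! #### the zero blocks of the Zelevinsky permutation -/

lemma onesIn_zero {L : LaceData} {vZ : Equiv.Perm ℕ} (hL : IsLacingDiagram n dx dy L)
    (hvZ : IsZelevinsky n dx dy L vZ) {pu pv : ℕ} (hpv : 1 ≤ pv) (hord : pv + 2 ≤ pu)
    (hpu : pu ≤ 2 * n + 1) :
    onesIn vZ (vertRowBlock n dx dy pu) (vertColBlock n dx dy pv) = 0 := by
  obtain ⟨hfix, hZ1, hZ2, _, _⟩ := hvZ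
  set C := vertColBlock n dx dy pv with hC
  -- the column block is inside the grid
  have hCsub : C ⊆ Finset.range (dd n dx dy) := by
    intro c hc
    rw [Finset.mem_range]
    rw [hC] at hc
    by_cases hp : pv % 2 = 1
    · rw [vertColBlock_odd n dx dy hp, Finset.mem_Ico] at hc
      unfold colY at hc
      have := rowY_add_le n dy (j := n - (pv - 1) / 2) (by omega)
      unfold dd
      omega
    · rw [vertColBlock_even n dx dy hp, Finset.mem_Ico] at hc
      set k := n - pv / 2 + 1 with hk
      have hc2 : colX n dx k + dx k = colX n dx (k - 1) := by
        have := colX_succ n dx (k := k - 1) (by omega)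
        rw [show k - 1 + 1 = k by omega] at this
        omega
      have := colX_le_dX n dx (k - 1)
      unfold dd
      omega
  have hCcard : C.card = colSize n dx dy pv := by
    rw [hC]
    by_cases hp : pv % 2 = 1
    · rw [vertColBlock_odd n dx dy hp, Nat.card_Ico]
      unfold colSize
      rw [if_pos hp]
      omega
    · rw [vertColBlock_even n dx dy hp, Nat.card_Ico]
      unfold colSize
      rw [if_neg hp]
      omega
  -- partial sum up to pv + 1 equals the block size (in ℤ)
  have hsum1 : ∑ p ∈ Finset.Icc 1 (pv + 1), (onesIn vZ (vertRowBlock n dx dy p) C : ℤ)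
      = (C.card : ℤ) := by
    rw [show Finset.Icc 1 (pv + 1) = insert (pv + 1) (Finset.Icc 1 pv) by
        ext a
        simp only [Finset.mem_Icc, Finset.mem_insert]
        omega,
      Finset.sum_insert (by simp only [Finset.mem_Icc]; omega)]
    have hZ1sum : ∑ p ∈ Finset.Icc 1 pv, (onesIn vZ (vertRowBlock n dx dy p) C : ℤ)
        = (pathCount n dx dy L pv pv : ℤ) - pathCount n dx dy L pv (pv + 1) := by
      have : ∀ p ∈ Finset.Icc 1 pv, (onesIn vZ (vertRowBlock n dx dy p) C : ℤ)
          = (fun u => (pathCount n dx dy L u pv : ℤ) - pathCount n dx dy L u (pv + 1)) p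
            - (fun u => (pathCount n dx dy L u pv : ℤ) - pathCount n dx dy L u (pv + 1)) (p - 1) := by
        intro p hp
        rw [Finset.mem_Icc] at hp
        rw [hC, hZ1 p pv hp.1 hp.2 (by omega)]
        unfold laceCount
        push_cast
        ring
      rw [Finset.sum_congr rfl this, tele_sum]
      simp only [pathCount_zero_left, Nat.cast_zero]
      ring
    rw [hZ1sum, hZ2 pv hpv (by omega), pathCount_one n dx dy hpv (by omega) L hL,
      pathCount_diag n dx dy hpv (by omega) L, hCcard]
    push_cast
    ring
  -- total sum equals the block size
  have hsum2 : ∑ p ∈ Finset.Icc 1 (2 * n + 1), (onesIn vZ (vertRowBlock n dx dy p) C : ℤ)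
      = (C.card : ℤ) := by
    rw [← Nat.cast_sum, onesIn_total n dx dy hfix hCsub]
  -- hence the tail vanishes
  have hsplit : Finset.Icc 1 (2 * n + 1)
      = Finset.Icc 1 (pv + 1) ∪ Finset.Icc (pv + 2) (2 * n + 1) := by
    ext a
    simp only [Finset.mem_Icc, Finset.mem_union]
    omega
  have hdisj : Disjoint (Finset.Icc 1 (pv + 1)) (Finset.Icc (pv + 2) (2 * n + 1)) := by
    refine Finset.disjoint_left.mpr (fun a ha ha' => ?_)
    rw [Finset.mem_Icc] at ha ha'
    omega
  rw [hsplit, Finset.sum_union hdisj, hsum1] at hsum2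
  have htail : ∑ p ∈ Finset.Icc (pv + 2) (2 * n + 1),
      (onesIn vZ (vertRowBlock n dx dy p) C : ℤ) = 0 := by omega
  have := (Finset.sum_eq_zero_iff_of_nonneg (fun p _ => Int.natCast_nonneg _)).mp htail
    pu (Finset.mem_Icc.mpr ⟨hord, hpu⟩)
  exact_mod_cast this

/-! #### value bounds of the Zelevinsky permutation -/

lemma zel_west {L : LaceData} {vZ : Equiv.Perm ℕ} (hL : IsLacingDiagram n dx dy L)
    (hvZ : IsZelevinsky n dx dy L vZ) {k i : ℕ} (hk : k ≤ n)
    (h1 : rowY dy k ≤ i) (h2 : i < rowY dy k + dy k) :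
    colX n dx (k + 1) ≤ vZ i := by
  have hiv : i < dd n dx dy := by
    have := rowY_add_le n dy hk
    unfold dd
    omega
  have hvi : vZ i < dd n dx dy := perm_lt_of_fixesFrom hvZ.1 i hiv
  rcases Nat.lt_or_ge (vZ i) (dX n dx) with hx | hy
  · obtain ⟨hb1, hb2, hb3, hb4⟩ := xblk_spec n dx hx
    set k' := xblk n dx (vZ i) with hk'
    rcases Nat.lt_or_ge (k + 1) k' with hlt | hge
    · exfalso
      have hzero := onesIn_zero n dx dy hL hvZ (pu := 2*(n-k)+1) (pv := 2*(n-k')+2)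
        (by omega) (by omega) (by omega)
      have hmem : i ∈ vertRowBlock n dx dy (2*(n-k)+1) := mem_vertRowBlock_y n dx dy hk h1 h2
      have hmemc : vZ i ∈ vertColBlock n dx dy (2*(n-k')+2) :=
        mem_vertColBlock_x n dx dy hb1 hb2 hb3 hb4 hx
      have hpos : 0 < onesIn vZ (vertRowBlock n dx dy (2*(n-k)+1))
          (vertColBlock n dx dy (2*(n-k')+2)) := by
        unfold onesIn
        rw [Finset.card_pos]
        exact ⟨i, Finset.mem_filter.mpr ⟨hmem, hmemc⟩⟩
      omega
    · exact le_trans (colX_antitone n dx hge) hb3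
  · exact le_trans (colX_le_dX n dx (k + 1)) hy

lemma zel_east {L : LaceData} {vZ : Equiv.Perm ℕ} (hL : IsLacingDiagram n dx dy L)
    (hvZ : IsZelevinsky n dx dy L vZ) {m r i : ℕ} (hm2 : m ≤ n)
    (h1 : rowY dy m ≤ r) (h2 : r < rowY dy m + dy m) (hi : i < dd n dx dy)
    (hvi : vZ i = dX n dx + r) : i < dY n dy + colX n dx (m - 1) := by
  rcases Nat.eq_zero_or_pos m with hm0 | hm1
  · subst hm0
    have : colX n dx (0 - 1) = dX n dx := colX_zero n dx
    unfold dd at hi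
    omega
  rcases Nat.lt_or_ge i (dY n dy) with hy | hx
  · have := colX_le_dX n dx (m - 1)
    omega
  · have hc : i - dY n dy < dX n dx := by unfold dd at hi; omega
    obtain ⟨hb1, hb2, hb3, hb4⟩ := xblk_spec n dx hc
    set k' := xblk n dx (i - dY n dy) with hk'
    rcases Nat.lt_or_ge k' m with hlt | hge
    · exfalso
      have hzero := onesIn_zero n dx dy hL hvZ (pu := 2*(n-k')+2) (pv := 2*(n-m)+1)
        (by omega) (by omega) (by omega)
      have hmem : i ∈ vertRowBlock n dx dy (2*(n-k')+2) :=
        mem_vertRowBlock_x n dx dy hb1 hb2 hb3 hb4 hx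
      have hmemc : vZ i ∈ vertColBlock n dx dy (2*(n-m)+1) := by
        apply mem_vertColBlock_y n dx dy hm2 (by omega) (by omega) (by omega)
      have hpos : 0 < onesIn vZ (vertRowBlock n dx dy (2*(n-k')+2))
          (vertColBlock n dx dy (2*(n-m)+1)) := by
        unfold onesIn
        rw [Finset.card_pos]
        exact ⟨i, Finset.mem_filter.mpr ⟨hmem, hmemc⟩⟩
      omega
    · have := colX_antitone n dx (show m - 1 ≤ k' - 1 by omega)
      omega

end PNproof5

section PNproof6

open List

/-! #### rotation of pipe dreams -/

lemma mem_rotF {K L : ℕ} {P : Finset (ℕ × ℕ)} (hP : ∀ p ∈ P, p.1 < K ∧ p.2 < L)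
    {a b : ℕ} (ha : a < K) (hb : b < L) :
    (K - 1 - a, L - 1 - b) ∈ rotF K L P ↔ (a, b) ∈ P := by
  unfold rotF
  rw [Finset.mem_image]
  constructor
  · rintro ⟨⟨x, y⟩, hxy, heq⟩
    obtain ⟨hx, hy⟩ := hP _ hxy
    simp only [Prod.mk.injEq] at heq
    have : x = a ∧ y = b := by omega
    rwa [show ((a : ℕ), (b : ℕ)) = (x, y) by simp only [Prod.mk.injEq]; omega]
  · intro h
    exact ⟨(a, b), h, rfl⟩

lemma rotF_bounds {K L : ℕ} {P : Finset (ℕ × ℕ)} (hP : ∀ p ∈ P, p.1 < K ∧ p.2 < L) :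
    ∀ p ∈ rotF K L P, p.1 < K ∧ p.2 < L := by
  intro p hp
  unfold rotF at hp
  rw [Finset.mem_image] at hp
  obtain ⟨⟨x, y⟩, hxy, heq⟩ := hp
  obtain ⟨hx, hy⟩ := hP _ hxy
  rw [← heq]
  constructor <;> simp only <;> omega

lemma rotF_invol {K L : ℕ} {P : Finset (ℕ × ℕ)} (hP : ∀ p ∈ P, p.1 < K ∧ p.2 < L) :
    rotF K L (rotF K L P) = P := by
  unfold rotF
  rw [Finset.image_image]
  have : ∀ p ∈ P, ((fun p : ℕ × ℕ => (K - 1 - p.1, L - 1 - p.2)) ∘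
      fun p : ℕ × ℕ => (K - 1 - p.1, L - 1 - p.2)) p = id p := by
    intro ⟨x, y⟩ hxy
    obtain ⟨hx, hy⟩ := hP _ hxy
    simp only [Function.comp_apply, id_eq, Prod.mk.injEq]
    omega
  rw [Finset.image_congr this, Finset.image_id]

lemma range_reverse_map (L : ℕ) :
    ((List.range L).reverse).map (fun j => L - 1 - j) = List.range L := by
  apply List.ext_getElem
  · simp
  · intro k h1 h2
    simp only [List.getElem_map, List.getElem_reverse, List.getElem_range]
    simp only [List.length_map, List.length_reverse, List.length_range] at h1
    simp only [List.length_reverse, List.length_range]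
    omega

lemma reverse_flatMap {α β : Type*} (l : List α) (f : α → List β) :
    (l.flatMap f).reverse = l.reverse.flatMap (fun a => (f a).reverse) := by
  induction l with
  | nil => rfl
  | cons a l ih =>
      rw [List.flatMap_cons, List.reverse_append, ih, List.reverse_cons, List.flatMap_append]
      simp

lemma filterMap_reverse {α β : Type*} (l : List α) (f : α → Option β) :
    l.reverse.filterMap f = (l.filterMap f).reverse := by
  induction l with
  | nil => rfl
  | cons a l ih =>
      rw [List.reverse_cons, List.filterMap_append, ih]
      cases h : f a <;> simp [List.filterMap_cons, h]

lemma flatMap_congr_mem {α β : Type*} {l : List α} {f g : α → List β}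
    (h : ∀ a ∈ l, f a = g a) : l.flatMap f = l.flatMap g := by
  induction l with
  | nil => rfl
  | cons a l ih =>
      rw [List.flatMap_cons, List.flatMap_cons, h a (by simp),
        ih (fun b hb => h b (by simp [hb]))]

lemma filterMap_congr_mem {α β : Type*} {l : List α} {f g : α → Option β}
    (h : ∀ a ∈ l, f a = g a) : l.filterMap f = l.filterMap g := by
  induction l with
  | nil => rfl
  | cons a l ih =>
      rw [List.filterMap_cons, List.filterMap_cons, h a (by simp),
        ih (fun b hb => h b (by simp [hb]))]

lemma range_rev_eq_map (L : ℕ) :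
    (List.range L).reverse = (List.range L).map (fun i => L - 1 - i) := by
  apply List.ext_getElem (by simp)
  intro k h1 h2
  simp only [List.getElem_reverse, List.getElem_range, List.getElem_map]
  simp only [List.length_reverse, List.length_range] at h1
  congr 1
  rw [List.length_range]

lemma pipeWord_rot {K L : ℕ} {P : Finset (ℕ × ℕ)} (hP : ∀ p ∈ P, p.1 < K ∧ p.2 < L) :
    pipeWord K L (rotF K L P) = ((pipeWord K L P).map (fun a => K + L - 2 - a)).reverse := by
  unfold pipeWord
  rw [List.map_flatMap, reverse_flatMap, range_rev_eq_map K, List.flatMap_map]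
  apply flatMap_congr_mem
  intro i hi
  rw [List.mem_range] at hi
  -- the row `i` of the rotated dream vs the reversed complemented row `K-1-i`
  rw [List.map_filterMap, ← filterMap_reverse, List.reverse_reverse,
    range_rev_eq_map L, List.filterMap_map]
  apply filterMap_congr_mem
  intro j hj
  rw [List.mem_range] at hj
  show (if (i, L - 1 - j) ∈ rotF K L P then some (i + (L - 1 - j)) else none)
      = ((if (K - 1 - i, j) ∈ P then some (K - 1 - i + j) else none).map
          fun a => K + L - 2 - a)
  have hmem : ((i, L - 1 - j) ∈ rotF K L P) ↔ ((K - 1 - i, j) ∈ P) := by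
    have h := mem_rotF hP (a := K - 1 - i) (b := j) (by omega) hj
    rwa [show K - 1 - (K - 1 - i) = i by omega] at h
  rw [apply_ite (Option.map fun a => K + L - 2 - a)]
  rw [if_congr hmem rfl rfl]
  split_ifs with h
  · show some (i + (L - 1 - j)) = some (K + L - 2 - (K - 1 - i + j))
    congr 1
    omega
  · rfl

lemma mem_pipeWord {K L : ℕ} {P : Finset (ℕ × ℕ)} {x : ℕ} (h : x ∈ pipeWord K L P) :
    ∃ i j, (i, j) ∈ P ∧ x = i + j := by
  rw [pipeWord_eq_rowsW] at h
  obtain ⟨i, j, hij, _, _, rfl⟩ := mem_rowsW h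
  exact ⟨i, j, hij, rfl⟩

lemma w0p_inv (m : ℕ) : (w0p m)⁻¹ = w0p m :=
  inv_eq_of_mul_eq_one_right (w0p_mul_self m)

lemma demazure_rot {K L : ℕ} {P : Finset (ℕ × ℕ)} (hP : ∀ p ∈ P, p.1 < K ∧ p.2 < L) :
    demazure K L (rotF K L P) = w0p (K + L) * (demazure K L P)⁻¹ * w0p (K + L) := by
  unfold demazure
  rw [pipeWord_rot hP, hword_reverse,
    hword_map_compl (K + L) _ (fun a ha => by
      obtain ⟨i, j, hij, rfl⟩ := mem_pipeWord ha
      have := hP _ hij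
      omega),
    mul_inv_rev, mul_inv_rev, w0p_inv, mul_assoc]

/-- recover the Demazure product from that of the rotation -/
lemma demazure_of_rot {K L : ℕ} {P : Finset (ℕ × ℕ)} (hP : ∀ p ∈ P, p.1 < K ∧ p.2 < L) :
    demazure K L P = w0p (K + L) * (demazure K L (rotF K L P))⁻¹ * w0p (K + L) := by
  rw [demazure_rot hP, mul_inv_rev, mul_inv_rev, w0p_inv, inv_inv]
  simp only [← mul_assoc]
  rw [w0p_mul_self, one_mul, mul_assoc, w0p_mul_self, mul_one]

end PNproof6

section PNproof7

variable (n : ℕ) (dx dy : ℕ → ℕ)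

lemma fixesFrom_inv {m : ℕ} {v : Equiv.Perm ℕ} (hv : fixesFrom m v) : fixesFrom m v⁻¹ := by
  intro x hx
  have h1 := hv x hx
  calc v⁻¹ x = v⁻¹ (v x) := by rw [h1]
    _ = x := Equiv.symm_apply_apply v x

/-- **Every pipe dream for the Zelevinsky permutation contains `P_*`.** -/
lemma pstar_subset {L₀ : LaceData} {vZ : Equiv.Perm ℕ}
    (hL₀ : IsLacingDiagram n dx dy L₀) (hvZ : IsZelevinsky n dx dy L₀ vZ)
    {P : Finset (ℕ × ℕ)} (hPb : ∀ p ∈ P, p.1 < dY n dy ∧ p.2 < dX n dx)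
    (hPd : demazure (dd n dx dy) (dd n dx dy) P = vZ) :
    Pstar n dx dy ⊆ P := by
  have hdd : dd n dx dy = dY n dy + dX n dx := rfl
  -- West forcing
  have hwest : ∀ s j, 0 ≤ s → s < dY n dy → 0 ≤ j → j < colX n dx (yblk n dy s + 1) →
      (s, j) ∈ P := by
    apply forcing_master P (dd n dx dy) (dd n dx dy) 0 (dY n dy) 0
      (fun s => colX n dx (yblk n dy s + 1))
      (fun p hp => ⟨⟨Nat.zero_le _, (hPb p hp).1⟩, ⟨Nat.zero_le _, by
        have := (hPb p hp).2; omega⟩⟩)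
      (by omega)
      (fun s s' h0 hss' hs' => colX_antitone n dx (by
        have := yblk_mono n dy hss'; omega))
      (fun s _ hs => by
        beta_reduce
        have := colX_le_dX n dx (yblk n dy s + 1)
        exact ⟨Nat.zero_le _, by omega⟩)
    intro s _ hs
    beta_reduce
    have hD : hword (pipeWord (dd n dx dy) (dd n dx dy) P) = vZ := hPd
    rw [hD, Nat.add_zero, Nat.zero_add]
    exact zel_west n dx dy hL₀ hvZ (yblk_le n dy s) (yblk_rowY_le n dy s) (yblk_lt n dy hs)
  -- East forcing on the rotated pipe dream
  set Q := rotF (dd n dx dy) (dd n dx dy) P with hQ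
  have hPb' : ∀ p ∈ P, p.1 < dd n dx dy ∧ p.2 < dd n dx dy := fun p hp =>
    ⟨by have := (hPb p hp).1; omega, by have := (hPb p hp).2; omega⟩
  have hQb : ∀ p ∈ Q, (dX n dx ≤ p.1 ∧ p.1 < dd n dx dy) ∧
      (dY n dy ≤ p.2 ∧ p.2 < dd n dx dy) := by
    intro p hp
    rw [hQ] at hp
    unfold rotF at hp
    rw [Finset.mem_image] at hp
    obtain ⟨⟨x, y⟩, hxy, heq⟩ := hp
    obtain ⟨hx, hy⟩ := hPb _ hxy
    rw [← heq]
    refine ⟨⟨?_, ?_⟩, ?_, ?_⟩ <;> simp only <;> omega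
  have hQd : demazure (dd n dx dy) (dd n dx dy) Q
      = w0p (dd n dx dy + dd n dx dy) * vZ⁻¹ * w0p (dd n dx dy + dd n dx dy) := by
    rw [hQ, demazure_rot hPb', hPd]
  have heast : ∀ s j, dX n dx ≤ s → s < dd n dx dy → dY n dy ≤ j →
      j < dd n dx dy - colX n dx (yblk n dy (dd n dx dy - 1 - s) - 1) → (s, j) ∈ Q := by
    apply forcing_master Q (dd n dx dy) (dd n dx dy) (dX n dx) (dd n dx dy) (dY n dy)
      (fun s => dd n dx dy - colX n dx (yblk n dy (dd n dx dy - 1 - s) - 1))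
      (fun p hp => hQb p hp) (le_refl _)
      (fun s s' h0 hss' hs' => by
        beta_reduce
        have hm := yblk_mono n dy (show dd n dx dy - 1 - s' ≤ dd n dx dy - 1 - s by omega)
        have := colX_antitone n dx
          (show yblk n dy (dd n dx dy - 1 - s') - 1 ≤ yblk n dy (dd n dx dy - 1 - s) - 1 by omega)
        omega)
      (fun s _ hs => by
        beta_reduce
        have := colX_le_dX n dx (yblk n dy (dd n dx dy - 1 - s) - 1)
        constructor <;> omega)
    intro s hs1 hs2
    beta_reduce
    have hD : hword (pipeWord (dd n dx dy) (dd n dx dy) Q)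
        = w0p (dd n dx dy + dd n dx dy) * vZ⁻¹ * w0p (dd n dx dy + dd n dx dy) := hQd
    rw [hD]
    set M := dd n dx dy + dd n dx dy with hM
    set r := dd n dx dy - 1 - s with hr
    have hrY : r < dY n dy := by omega
    have happ : (w0p M * vZ⁻¹ * w0p M) (s + dY n dy)
        = w0p M (vZ⁻¹ (w0p M (s + dY n dy))) := rfl
    have h1 : w0p M (s + dY n dy) = dX n dx + r := by
      rw [w0p_apply, if_pos (by omega)]
      omega
    set i := vZ⁻¹ (dX n dx + r) with hi
    have hiv : vZ i = dX n dx + r := by rw [hi]; exact Equiv.apply_symm_apply vZ _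
    have hid : i < dd n dx dy := by
      rw [hi]
      exact perm_lt_of_fixesFrom (fixesFrom_inv hvZ.1) _ (by omega)
    have hbound : i < dY n dy + colX n dx (yblk n dy r - 1) :=
      zel_east n dx dy hL₀ hvZ (yblk_le n dy r) (yblk_rowY_le n dy r)
        (yblk_lt n dy hrY) hid hiv
    have h2 : w0p M i = M - 1 - i := by rw [w0p_apply, if_pos (by omega)]
    rw [happ, h1, ← hi, h2]
    have := colX_le_dX n dx (yblk n dy r - 1)
    omega
  -- combine
  intro p hmem
  obtain ⟨r, jc⟩ := p
  unfold Pstar at hmem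
  rw [Finset.mem_sdiff, Finset.mem_product, Finset.mem_range, Finset.mem_range] at hmem
  obtain ⟨⟨hr, hjc⟩, hsnake⟩ := hmem
  set k := yblk n dy r with hk
  have hkn := yblk_le n dy r
  have hk1 := yblk_rowY_le n dy r
  have hk2 := yblk_lt n dy hr
  rcases Nat.lt_or_ge jc (colX n dx (k + 1)) with hW | hg1
  · exact hwest r jc (Nat.zero_le r) hr (Nat.zero_le jc) hW
  rcases Nat.lt_or_ge jc (colX n dx k) with hA | hg2
  · -- the cell lies in the block α_{k+1}: contradiction
    exfalso
    apply hsnake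
    unfold snake
    rw [Finset.mem_biUnion]
    have hklt : k < n := by
      by_contra hc
      push_neg at hc
      have := colX_of_ge n dx hc
      omega
    refine ⟨k + 1, Finset.mem_Icc.mpr ⟨by omega, by omega⟩, ?_⟩
    rw [Finset.mem_union]
    left
    unfold alphaBlock
    rw [Finset.mem_product]
    have hcs := colX_succ n dx hklt
    simp only [Nat.add_sub_cancel]
    exact ⟨Finset.mem_Ico.mpr ⟨hk1, hk2⟩, Finset.mem_Ico.mpr ⟨hg1, by omega⟩⟩
  rcases Nat.lt_or_ge jc (colX n dx (k - 1)) with hB | hE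
  · -- the cell lies in the block β_k: contradiction
    exfalso
    apply hsnake
    unfold snake
    rw [Finset.mem_biUnion]
    have hk0 : 1 ≤ k := by
      by_contra hc
      push_neg at hc
      have hzz : k = 0 := by omega
      rw [hzz, colX_zero] at hg2
      omega
    refine ⟨k, Finset.mem_Icc.mpr ⟨hk0, hkn⟩, ?_⟩
    rw [Finset.mem_union]
    right
    unfold betaBlock
    rw [Finset.mem_product]
    have hcs := colX_succ n dx (k := k - 1) (by omega)
    rw [show k - 1 + 1 = k by omega] at hcs
    exact ⟨Finset.mem_Ico.mpr ⟨hk1, hk2⟩, Finset.mem_Ico.mpr ⟨hg2, by omega⟩⟩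
  · -- East region
    have hcol := colX_le_dX n dx (k - 1)
    have hmm := heast (dd n dx dy - 1 - r) (dd n dx dy - 1 - jc)
      (by omega) (by omega) (by omega)
      (by
        rw [show dd n dx dy - 1 - (dd n dx dy - 1 - r) = r by omega, ← hk]
        omega)
    rw [hQ] at hmm
    exact (mem_rotF hPb' (a := r) (b := jc) (by omega) (by omega)).mp hmm

end PNproof7

section PNproof8

open List

variable (n : ℕ) (dx dy : ℕ → ℕ)

/-- swap two hword-fold factors with distant letters -/
lemma hf_swap (u : Equiv.Perm ℕ) (X Y : List ℕ)
    (h : ∀ a ∈ X, ∀ b ∈ Y, b + 2 ≤ a ∨ a + 2 ≤ b) :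
    hf (hf u X) Y = hf (hf u Y) X := by
  rw [← hf_append, hf_block_swap X Y u h, hf_append]

/-- letters of a stack of row segments -/
lemma mem_flat_rowW {P : Finset (ℕ × ℕ)} {s m a b x : ℕ}
    (h : x ∈ (List.range' s m).flatMap fun r => rowW P r a b) :
    ∃ r, s ≤ r ∧ r < s + m ∧ r + a ≤ x ∧ x < r + a + (b - a) := by
  rw [List.mem_flatMap] at h
  obtain ⟨r, hr, hx⟩ := h
  rw [List.mem_range'_1] at hr
  obtain ⟨j, _, hj1, hj2, rfl⟩ := mem_rowW hx
  exact ⟨r, hr.1, hr.2, by omega, by omega⟩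

/-- the four segments of a row block -/
def segE (P : Finset (ℕ × ℕ)) (k : ℕ) : List ℕ :=
  (List.range' (rowY dy k) (dy k)).flatMap fun r => rowW P r (colX n dx (k - 1)) (dX n dx)

def segB (P : Finset (ℕ × ℕ)) (k : ℕ) : List ℕ :=
  (List.range' (rowY dy k) (dy k)).flatMap fun r => rowW P r (colX n dx k) (colX n dx (k - 1))

def segA (P : Finset (ℕ × ℕ)) (k : ℕ) : List ℕ :=
  (List.range' (rowY dy k) (dy k)).flatMap fun r => rowW P r (colX n dx (k + 1)) (colX n dx k)

def segW (P : Finset (ℕ × ℕ)) (k : ℕ) : List ℕ :=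
  (List.range' (rowY dy k) (dy k)).flatMap fun r => rowW P r 0 (colX n dx (k + 1))

/-- decomposition of a full row of the grid word -/
lemma row_decomp {P : Finset (ℕ × ℕ)} (hPb : ∀ p ∈ P, p.2 < dX n dx) (k r : ℕ) :
    rowW P r 0 (dd n dx dy)
      = rowW P r (colX n dx (k - 1)) (dX n dx) ++
        (rowW P r (colX n dx k) (colX n dx (k - 1)) ++
          (rowW P r (colX n dx (k + 1)) (colX n dx k) ++
            rowW P r 0 (colX n dx (k + 1)))) := by
  have hca : colX n dx (k + 1) ≤ colX n dx k := colX_antitone n dx (by omega)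
  have hcb : colX n dx k ≤ colX n dx (k - 1) := colX_antitone n dx (by omega)
  have hce : colX n dx (k - 1) ≤ dX n dx := colX_le_dX n dx _
  have hdd : dX n dx ≤ dd n dx dy := by unfold dd; omega
  rw [rowW_split P r (Nat.zero_le (dX n dx)) hdd,
    rowW_empty P r (dX n dx) (dd n dx dy) (fun j hj _ hP' => by have := hPb _ hP'; omega),
    List.nil_append,
    rowW_split P r (Nat.zero_le (colX n dx (k - 1))) hce,
    rowW_split P r (Nat.zero_le (colX n dx k)) hcb,
    rowW_split P r (Nat.zero_le (colX n dx (k + 1))) hca]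

/-- rearranging one row block into its four grouped segments -/
lemma block_decomp {P : Finset (ℕ × ℕ)} (hPb : ∀ p ∈ P, p.2 < dX n dx) (k : ℕ) :
    ∀ t, t ≤ dy k → ∀ u : Equiv.Perm ℕ,
    hf u (rowsW P (dd n dx dy) (rowY dy k) t)
      = hf (hf (hf (hf u
          ((List.range' (rowY dy k) t).flatMap fun r => rowW P r (colX n dx (k - 1)) (dX n dx)))
          ((List.range' (rowY dy k) t).flatMap fun r => rowW P r (colX n dx k) (colX n dx (k - 1))))
          ((List.range' (rowY dy k) t).flatMap fun r => rowW P r (colX n dx (k + 1)) (colX n dx k)))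
          ((List.range' (rowY dy k) t).flatMap fun r => rowW P r 0 (colX n dx (k + 1))) := by
  have hca : colX n dx (k + 1) ≤ colX n dx k := colX_antitone n dx (by omega)
  have hcb : colX n dx k ≤ colX n dx (k - 1) := colX_antitone n dx (by omega)
  have hce : colX n dx (k - 1) ≤ dX n dx := colX_le_dX n dx _
  intro t
  induction t with
  | zero => intro _ u; rfl
  | succ t ih =>
      intro ht u
      set r' := rowY dy k + t with hr'
      have hsingle : ∀ (f : ℕ → List ℕ),
          (List.range' (rowY dy k) (t + 1)).flatMap f
            = (List.range' (rowY dy k) t).flatMap f ++ f r' := by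
        intro f
        have h := List.range'_append (s := rowY dy k) (m := t) (n := 1) (step := 1)
        simp only [one_mul, List.range'_one] at h
        rw [← h, List.flatMap_append]
        simp [hr']
      set E' := rowW P r' (colX n dx (k - 1)) (dX n dx) with hE'
      set B' := rowW P r' (colX n dx k) (colX n dx (k - 1)) with hB'
      set A' := rowW P r' (colX n dx (k + 1)) (colX n dx k) with hA'
      set W' := rowW P r' 0 (colX n dx (k + 1)) with hW'
      set uE := (List.range' (rowY dy k) t).flatMap
        (fun r => rowW P r (colX n dx (k - 1)) (dX n dx)) with huE
      set uB := (List.range' (rowY dy k) t).flatMap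
        (fun r => rowW P r (colX n dx k) (colX n dx (k - 1))) with huB
      set uA := (List.range' (rowY dy k) t).flatMap
        (fun r => rowW P r (colX n dx (k + 1)) (colX n dx k)) with huA
      set uW := (List.range' (rowY dy k) t).flatMap
        (fun r => rowW P r 0 (colX n dx (k + 1))) with huW
      -- letter bounds
      have hbE : ∀ x ∈ E', r' + colX n dx (k - 1) ≤ x := by
        intro x hx
        rw [hE'] at hx
        obtain ⟨j, _, hj1, _, rfl⟩ := mem_rowW hx
        omega
      have hbB : ∀ x ∈ B', r' + colX n dx k ≤ x := by
        intro x hx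
        rw [hB'] at hx
        obtain ⟨j, _, hj1, _, rfl⟩ := mem_rowW hx
        omega
      have hbA : ∀ x ∈ A', r' + colX n dx (k + 1) ≤ x := by
        intro x hx
        rw [hA'] at hx
        obtain ⟨j, _, hj1, _, rfl⟩ := mem_rowW hx
        omega
      have huBb : ∀ x ∈ uB, x + 1 < r' + colX n dx (k - 1) := by
        intro x hx
        rw [huB] at hx
        obtain ⟨r, h1, h2, h3, h4⟩ := mem_flat_rowW hx
        omega
      have huAb : ∀ x ∈ uA, x + 1 < r' + colX n dx k := by
        intro x hx
        rw [huA] at hx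
        obtain ⟨r, h1, h2, h3, h4⟩ := mem_flat_rowW hx
        omega
      have huWb : ∀ x ∈ uW, x + 1 < r' + colX n dx (k + 1) := by
        intro x hx
        rw [huW] at hx
        obtain ⟨r, h1, h2, h3, h4⟩ := mem_flat_rowW hx
        omega
      have key : hf (hf (hf (hf (hf u uE) uB) uA) uW) (E' ++ (B' ++ (A' ++ W')))
          = hf (hf (hf (hf u (uE ++ E')) (uB ++ B')) (uA ++ A')) (uW ++ W') := by
        rw [hf_append, hf_append, hf_append]
        rw [hf_swap _ uW E' (fun a ha b hb => by
          have h1 := huWb a ha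
          have h2 := hbE b hb
          right; omega)]
        rw [hf_swap _ uA E' (fun a ha b hb => by
          have h1 := huAb a ha
          have h2 := hbE b hb
          right; omega)]
        rw [hf_swap _ uB E' (fun a ha b hb => by
          have h1 := huBb a ha
          have h2 := hbE b hb
          right; omega)]
        rw [hf_swap _ uW B' (fun a ha b hb => by
          have h1 := huWb a ha
          have h2 := hbB b hb
          right; omega)]
        rw [hf_swap _ uA B' (fun a ha b hb => by
          have h1 := huAb a ha
          have h2 := hbB b hb
          right; omega)]
        rw [hf_swap _ uW A' (fun a ha b hb => by
          have h1 := huWb a ha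
          have h2 := hbA b hb
          right; omega)]
        rw [← hf_append _ uW W', ← hf_append _ uA A', ← hf_append _ uB B', ← hf_append _ uE E']
      rw [rowsW_succ P (dd n dx dy) (rowY dy k) t, hf_append, ih (by omega) u,
        row_decomp n dx dy hPb k r', key, hsingle, hsingle, hsingle, hsingle]


end PNproof8

section PNproof9

open List

variable (n : ℕ) (dx dy : ℕ → ℕ)

/-- grouped word of the first `m` row blocks -/
def GLw (P : Finset (ℕ × ℕ)) : ℕ → List ℕ
  | 0 => []
  | m + 1 => GLw P m ++
      (segE n dx dy P m ++ (segB n dx dy P m ++ (segA n dx dy P m ++ segW n dx dy P m)))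

lemma hword_GLw {P : Finset (ℕ × ℕ)} (hPb : ∀ p ∈ P, p.1 < dY n dy ∧ p.2 < dX n dx) :
    ∀ m, hword (rowsW P (dd n dx dy) 0 (rowY dy m)) = hword (GLw n dx dy P m) := by
  intro m
  induction m with
  | zero => rfl
  | succ m ih =>
      have h1 : rowY dy (m + 1) = rowY dy m + dy m := rowY_succ dy m
      rw [h1, rowsW_append, hword_append, Nat.zero_add, ih]
      show hf (hword (GLw n dx dy P m)) (rowsW P (dd n dx dy) (rowY dy m) (dy m))
          = hword (GLw n dx dy P (m + 1))
      rw [block_decomp n dx dy (fun p hp => (hPb p hp).2) m (dy m) (le_refl _)]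
      have hGL : GLw n dx dy P (m + 1) = GLw n dx dy P m ++
          (segE n dx dy P m ++ (segB n dx dy P m ++ (segA n dx dy P m ++ segW n dx dy P m))) := by
        rfl
      rw [hGL, hword_append, hf_append, hf_append, hf_append]
      rfl

lemma demazure_eq_hword_GL {P : Finset (ℕ × ℕ)}
    (hPb : ∀ p ∈ P, p.1 < dY n dy ∧ p.2 < dX n dx) :
    demazure (dd n dx dy) (dd n dx dy) P = hword (GLw n dx dy P (n + 1)) := by
  show hword (pipeWord (dd n dx dy) (dd n dx dy) P) = _
  have hsplit : rowsW P (dd n dx dy) 0 (dd n dx dy)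
      = rowsW P (dd n dx dy) 0 (rowY dy (n + 1)) ++
        rowsW P (dd n dx dy) (0 + rowY dy (n + 1)) (dd n dx dy - rowY dy (n + 1)) := by
    rw [← rowsW_append]
    congr 1
    have : rowY dy (n + 1) = dY n dy := rowY_last n dy
    unfold dd
    omega
  rw [pipeWord_eq_rowsW, hsplit, hword_append,
    rowsW_nil P (dd n dx dy) (0 + rowY dy (n + 1)) _ (fun i h1 h2 j hij => by
      have h3 := (hPb _ hij).1
      have h4 : rowY dy (n + 1) = dY n dy := rowY_last n dy
      omega), hf_nil]
  exact hword_GLw n dx dy hPb (n + 1)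

/-- cells in the far east or far west of a row block lie in `P_*` -/
lemma cell_pstar {k r j : ℕ} (hk : k ≤ n) (hr1 : rowY dy k ≤ r) (hr2 : r < rowY dy k + dy k)
    (hj : j < dX n dx) (hcase : j < colX n dx (k + 1) ∨ colX n dx (k - 1) ≤ j) :
    (r, j) ∈ Pstar n dx dy := by
  unfold Pstar
  rw [Finset.mem_sdiff, Finset.mem_product]
  have hrY : r < dY n dy := by
    have := rowY_add_le n dy hk
    omega
  refine ⟨⟨Finset.mem_range.mpr hrY, Finset.mem_range.mpr hj⟩, ?_⟩
  intro hmem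
  unfold snake at hmem
  rw [Finset.mem_biUnion] at hmem
  obtain ⟨l, hl, hcell⟩ := hmem
  rw [Finset.mem_Icc] at hl
  rw [Finset.mem_union] at hcell
  have hyk : yblk n dy r = k := yblk_eq n dy hk hr1 hr2
  rcases hcell with hcell | hcell
  · unfold alphaBlock at hcell
    rw [Finset.mem_product, Finset.mem_Ico, Finset.mem_Ico] at hcell
    obtain ⟨⟨ha1, ha2⟩, hb1, hb2⟩ := hcell
    have : yblk n dy r = l - 1 := yblk_eq n dy (by omega) ha1 ha2
    have hlk : l = k + 1 := by omega
    subst hlk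
    have hcs := colX_succ n dx (k := k) (by omega)
    have := colX_antitone n dx (show k - 1 ≤ k by omega)
    omega
  · unfold betaBlock at hcell
    rw [Finset.mem_product, Finset.mem_Ico, Finset.mem_Ico] at hcell
    obtain ⟨⟨ha1, ha2⟩, hb1, hb2⟩ := hcell
    have : yblk n dy r = l := yblk_eq n dy (by omega) ha1 ha2
    have hlk : l = k := by omega
    subst hlk
    have hcs := colX_succ n dx (k := l - 1) (by omega)
    rw [show l - 1 + 1 = l by omega] at hcs
    have := colX_antitone n dx (show l ≤ l + 1 by omega)
    omega

lemma segE_eq {P P' : Finset (ℕ × ℕ)} (hPs : Pstar n dx dy ⊆ P) (hP's : Pstar n dx dy ⊆ P')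
    {k : ℕ} (hk : k ≤ n) : segE n dx dy P k = segE n dx dy P' k := by
  unfold segE
  apply flatMap_congr_mem
  intro r hr
  rw [List.mem_range'_1] at hr
  have hce : colX n dx (k - 1) ≤ dX n dx := colX_le_dX n dx _
  have hfull : ∀ Q : Finset (ℕ × ℕ), Pstar n dx dy ⊆ Q →
      rowW Q r (colX n dx (k - 1)) (dX n dx)
        = drun (r + colX n dx (k - 1)) (dX n dx - colX n dx (k - 1)) := by
    intro Q hQ
    apply rowW_full Q r hce
    intro j h1 h2
    exact hQ (cell_pstar n dx dy hk hr.1 hr.2 h2 (Or.inr h1))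
  rw [hfull P hPs, hfull P' hP's]

lemma segW_eq {P P' : Finset (ℕ × ℕ)} (hPs : Pstar n dx dy ⊆ P) (hP's : Pstar n dx dy ⊆ P')
    {k : ℕ} (hk : k ≤ n) : segW n dx dy P k = segW n dx dy P' k := by
  unfold segW
  apply flatMap_congr_mem
  intro r hr
  rw [List.mem_range'_1] at hr
  have hfull : ∀ Q : Finset (ℕ × ℕ), Pstar n dx dy ⊆ Q →
      rowW Q r 0 (colX n dx (k + 1)) = drun (r + 0) (colX n dx (k + 1) - 0) := by
    intro Q hQ
    apply rowW_full Q r (Nat.zero_le _)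
    intro j h1 h2
    refine hQ (cell_pstar n dx dy hk hr.1 hr.2 ?_ (Or.inl (by omega)))
    have := colX_le_dX n dx (k + 1)
    omega
  rw [hfull P hPs, hfull P' hP's]

lemma mem_miniB {P : Finset (ℕ × ℕ)} {k a b : ℕ} (ha : a < dy k) (hb : b < dx k) :
    (a, b) ∈ miniB n dx dy P k ↔ (rowY dy k + a, colX n dx k + b) ∈ P := by
  unfold miniB betaBlock
  rw [Finset.mem_image]
  constructor
  · rintro ⟨⟨x, y⟩, hxy, heq⟩
    rw [Finset.mem_inter, Finset.mem_product, Finset.mem_Ico, Finset.mem_Ico] at hxy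
    obtain ⟨hP, ⟨hx1, hx2⟩, hy1, hy2⟩ := hxy
    simp only [Prod.mk.injEq] at heq
    have : x = rowY dy k + a ∧ y = colX n dx k + b := by omega
    rw [show (rowY dy k + a, colX n dx k + b) = (x, y) by
      simp only [Prod.mk.injEq]; omega]
    exact hP
  · intro h
    refine ⟨(rowY dy k + a, colX n dx k + b), ?_, by simp only [Prod.mk.injEq]; omega⟩
    rw [Finset.mem_inter, Finset.mem_product, Finset.mem_Ico, Finset.mem_Ico]
    exact ⟨h, ⟨by omega, by omega⟩, by omega, by omega⟩

lemma mem_miniA {P : Finset (ℕ × ℕ)} {k a b : ℕ} (ha : a < dy (k - 1)) (hb : b < dx k) :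
    (a, b) ∈ miniA n dx dy P k ↔ (rowY dy (k - 1) + a, colX n dx k + b) ∈ P := by
  unfold miniA alphaBlock
  rw [Finset.mem_image]
  constructor
  · rintro ⟨⟨x, y⟩, hxy, heq⟩
    rw [Finset.mem_inter, Finset.mem_product, Finset.mem_Ico, Finset.mem_Ico] at hxy
    obtain ⟨hP, ⟨hx1, hx2⟩, hy1, hy2⟩ := hxy
    simp only [Prod.mk.injEq] at heq
    rw [show (rowY dy (k - 1) + a, colX n dx k + b) = (x, y) by
      simp only [Prod.mk.injEq]; omega]
    exact hP
  · intro h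
    refine ⟨(rowY dy (k - 1) + a, colX n dx k + b), ?_, by simp only [Prod.mk.injEq]; omega⟩
    rw [Finset.mem_inter, Finset.mem_product, Finset.mem_Ico, Finset.mem_Ico]
    exact ⟨h, ⟨by omega, by omega⟩, by omega, by omega⟩

lemma miniB_bounds (P : Finset (ℕ × ℕ)) (k : ℕ) :
    ∀ p ∈ miniB n dx dy P k, p.1 < dy k ∧ p.2 < dx k := by
  intro p hp
  unfold miniB betaBlock at hp
  rw [Finset.mem_image] at hp
  obtain ⟨⟨x, y⟩, hxy, heq⟩ := hp
  rw [Finset.mem_inter, Finset.mem_product, Finset.mem_Ico, Finset.mem_Ico] at hxy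
  obtain ⟨_, ⟨hx1, hx2⟩, hy1, hy2⟩ := hxy
  rw [← heq]
  constructor <;> simp only <;> omega

lemma miniA_bounds (P : Finset (ℕ × ℕ)) (k : ℕ) :
    ∀ p ∈ miniA n dx dy P k, p.1 < dy (k - 1) ∧ p.2 < dx k := by
  intro p hp
  unfold miniA alphaBlock at hp
  rw [Finset.mem_image] at hp
  obtain ⟨⟨x, y⟩, hxy, heq⟩ := hp
  rw [Finset.mem_inter, Finset.mem_product, Finset.mem_Ico, Finset.mem_Ico] at hxy
  obtain ⟨_, ⟨hx1, hx2⟩, hy1, hy2⟩ := hxy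
  rw [← heq]
  constructor <;> simp only <;> omega

end PNproof9

section PNproof10

open List

variable (n : ℕ) (dx dy : ℕ → ℕ)

lemma rowW_self (P : Finset (ℕ × ℕ)) (r c : ℕ) : rowW P r c c = [] := by
  unfold rowW
  rw [Nat.sub_self]
  rfl

lemma flatMap_nil' {α β : Type*} (l : List α) (f : α → List β) (h : ∀ a ∈ l, f a = []) :
    l.flatMap f = [] := by
  induction l with
  | nil => rfl
  | cons a l ih =>
      rw [List.flatMap_cons, h a (by simp), ih (fun b hb => h b (by simp [hb])), List.nil_append]

lemma segB_zero (P : Finset (ℕ × ℕ)) : segB n dx dy P 0 = [] := by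
  unfold segB
  apply flatMap_nil'
  intro r _
  show rowW P r (colX n dx 0) (colX n dx (0 - 1)) = []
  exact rowW_self P r (colX n dx 0)

lemma segA_n (P : Finset (ℕ × ℕ)) : segA n dx dy P n = [] := by
  unfold segA
  apply flatMap_nil'
  intro r _
  rw [colX_of_ge n dx (le_refl n), colX_of_ge n dx (by omega : n ≤ n + 1)]
  exact rowW_self P r 0

/-- the `β_k` segment is the shifted word of the mini pipe dream `P_k` -/
lemma segB_eq_mini (P : Finset (ℕ × ℕ)) {k : ℕ} (hk1 : 1 ≤ k) (hk2 : k ≤ n) :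
    segB n dx dy P k
      = (pipeWord (dy k) (dx k) (miniB n dx dy P k)).map (· + (rowY dy k + colX n dx k)) := by
  have hcs : colX n dx (k - 1) = colX n dx k + dx k := by
    have := colX_succ n dx (k := k - 1) (by omega)
    rw [show k - 1 + 1 = k by omega] at this
    omega
  unfold segB pipeWord
  rw [List.map_flatMap, List.range'_eq_map_range, List.flatMap_map]
  apply flatMap_congr_mem
  intro a ha
  rw [List.mem_range] at ha
  unfold rowW
  rw [show colX n dx (k - 1) - colX n dx k = dx k by omega, List.range'_eq_map_range,
    ← List.map_reverse, List.filterMap_map, List.map_filterMap]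
  apply filterMap_congr_mem
  intro b hb
  rw [List.mem_reverse, List.mem_range] at hb
  show (if (rowY dy k + a, colX n dx k + b) ∈ P
      then some (rowY dy k + a + (colX n dx k + b)) else none)
    = Option.map (· + (rowY dy k + colX n dx k))
        (if (a, b) ∈ miniB n dx dy P k then some (a + b) else none)
  by_cases h : (a, b) ∈ miniB n dx dy P k
  · rw [if_pos h, if_pos ((mem_miniB n dx dy ha hb).mp h)]
    show _ = some (a + b + (rowY dy k + colX n dx k))
    congr 1
    omega
  · rw [if_neg h, if_neg (fun hc => h ((mem_miniB n dx dy ha hb).mpr hc))]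
    rfl

/-- the `α_{k+1}` segment is the shifted word of the mini pipe dream `P^{k+1}` -/
lemma segA_eq_mini (P : Finset (ℕ × ℕ)) {k : ℕ} (hk : k < n) :
    segA n dx dy P k
      = (pipeWord (dy k) (dx (k + 1)) (miniA n dx dy P (k + 1))).map
          (· + (rowY dy k + colX n dx (k + 1))) := by
  have hcs : colX n dx k = colX n dx (k + 1) + dx (k + 1) := by
    have := colX_succ n dx hk
    omega
  have hk1 : (k + 1) - 1 = k := by omega
  unfold segA pipeWord
  rw [List.map_flatMap, List.range'_eq_map_range, List.flatMap_map]
  apply flatMap_congr_mem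
  intro a ha
  rw [List.mem_range] at ha
  unfold rowW
  rw [show colX n dx k - colX n dx (k + 1) = dx (k + 1) by omega, List.range'_eq_map_range,
    ← List.map_reverse, List.filterMap_map, List.map_filterMap]
  apply filterMap_congr_mem
  intro b hb
  rw [List.mem_reverse, List.mem_range] at hb
  have hmm := mem_miniA n dx dy (P := P) (k := k + 1) (a := a) (b := b) (by rw [hk1]; exact ha) hb
  rw [hk1] at hmm
  show (if (rowY dy k + a, colX n dx (k + 1) + b) ∈ P
      then some (rowY dy k + a + (colX n dx (k + 1) + b)) else none)
    = Option.map (· + (rowY dy k + colX n dx (k + 1)))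
        (if (a, b) ∈ miniA n dx dy P (k + 1) then some (a + b) else none)
  by_cases h : (a, b) ∈ miniA n dx dy P (k + 1)
  · rw [if_pos h, if_pos (hmm.mp h)]
    show _ = some (a + b + (rowY dy k + colX n dx (k + 1)))
    congr 1
    omega
  · rw [if_neg h, if_neg (fun hc => h (hmm.mpr hc))]
    rfl

/-- **Demazure products agree when the mini Demazure products agree.** -/
lemma demazure_eq_of_mini_eq {P P' : Finset (ℕ × ℕ)}
    (hPb : ∀ p ∈ P, p.1 < dY n dy ∧ p.2 < dX n dx)
    (hP'b : ∀ p ∈ P', p.1 < dY n dy ∧ p.2 < dX n dx)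
    (hPs : Pstar n dx dy ⊆ P) (hP's : Pstar n dx dy ⊆ P')
    (hmB : ∀ k, 1 ≤ k → k ≤ n →
      demazure (dy k) (dx k) (miniB n dx dy P k) = demazure (dy k) (dx k) (miniB n dx dy P' k))
    (hmA : ∀ k, 1 ≤ k → k ≤ n →
      demazure (dy (k - 1)) (dx k) (rotF (dy (k - 1)) (dx k) (miniA n dx dy P k))
        = demazure (dy (k - 1)) (dx k) (rotF (dy (k - 1)) (dx k) (miniA n dx dy P' k))) :
    demazure (dd n dx dy) (dd n dx dy) P = demazure (dd n dx dy) (dd n dx dy) P' := by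
  rw [demazure_eq_hword_GL n dx dy hPb, demazure_eq_hword_GL n dx dy hP'b]
  have key : ∀ m, m ≤ n + 1 → hword (GLw n dx dy P m) = hword (GLw n dx dy P' m) := by
    intro m
    induction m with
    | zero => intro _; rfl
    | succ m ih =>
        intro hm
        have hmn : m ≤ n := by omega
        have hGL : ∀ Q, GLw n dx dy Q (m + 1) = GLw n dx dy Q m ++
            (segE n dx dy Q m ++ (segB n dx dy Q m ++ (segA n dx dy Q m ++ segW n dx dy Q m))) :=
          fun Q => rfl
        -- replace the prefix
        have step1 : hword (GLw n dx dy P (m + 1))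
            = hword (GLw n dx dy P' m ++
              (segE n dx dy P' m ++ (segB n dx dy P m ++ (segA n dx dy P m ++ segW n dx dy P' m)))) := by
          rw [hGL, segE_eq n dx dy hPs hP's hmn, segW_eq n dx dy hPs hP's hmn,
            hword_append, hword_append, ih (by omega)]
        rw [step1, hGL]
        -- replace the B segment
        have hB : hword (segB n dx dy P m) = hword (segB n dx dy P' m) := by
          rcases Nat.eq_zero_or_pos m with h0 | h1
          · subst h0
            rw [segB_zero, segB_zero]
          · rw [segB_eq_mini n dx dy P h1 hmn, segB_eq_mini n dx dy P' h1 hmn,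
              hword_map_shift, hword_map_shift]
            show shiftPerm _ (demazure (dy m) (dx m) (miniB n dx dy P m))
              = shiftPerm _ (demazure (dy m) (dx m) (miniB n dx dy P' m))
            rw [hmB m h1 hmn]
        have hA : hword (segA n dx dy P m) = hword (segA n dx dy P' m) := by
          rcases Nat.eq_or_lt_of_le hmn with he | hlt
          · rw [he, segA_n, segA_n]
          · rw [segA_eq_mini n dx dy P hlt, segA_eq_mini n dx dy P' hlt,
              hword_map_shift, hword_map_shift]
            have hrw : ∀ Q, demazure (dy m) (dx (m + 1)) (miniA n dx dy Q (m + 1))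
                = w0p (dy m + dx (m + 1)) *
                  (demazure (dy m) (dx (m + 1))
                    (rotF (dy m) (dx (m + 1)) (miniA n dx dy Q (m + 1))))⁻¹ *
                  w0p (dy m + dx (m + 1)) := by
              intro Q
              apply demazure_of_rot
              intro p hp
              have := miniA_bounds n dx dy Q (m + 1) p hp
              rwa [show m + 1 - 1 = m by omega] at this
            show shiftPerm _ (demazure (dy m) (dx (m + 1)) (miniA n dx dy P (m + 1)))
              = shiftPerm _ (demazure (dy m) (dx (m + 1)) (miniA n dx dy P' (m + 1)))
            rw [hrw P, hrw P']
            have := hmA (m + 1) (by omega) (by omega)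
            rw [show m + 1 - 1 = m by omega] at this
            rw [this]
        -- replace B and A inside the concatenation
        have e1 : ∀ (X B A W : List ℕ), X ++ (segE n dx dy P' m ++ (B ++ (A ++ W)))
            = ((X ++ segE n dx dy P' m) ++ B) ++ (A ++ W) := by
          intro X B A W
          simp [List.append_assoc]
        rw [e1, e1]
        rw [show ((GLw n dx dy P' m ++ segE n dx dy P' m) ++ segB n dx dy P m) ++
            (segA n dx dy P m ++ segW n dx dy P' m)
            = (GLw n dx dy P' m ++ segE n dx dy P' m) ++ segB n dx dy P m ++
              (segA n dx dy P m ++ segW n dx dy P' m) from by simp [List.append_assoc]]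
        rw [hword_congr_middle _ _ hB]
        have e2 : (GLw n dx dy P' m ++ segE n dx dy P' m) ++ segB n dx dy P' m ++
            (segA n dx dy P m ++ segW n dx dy P' m)
            = ((GLw n dx dy P' m ++ segE n dx dy P' m) ++ segB n dx dy P' m) ++
              segA n dx dy P m ++ segW n dx dy P' m := by
          simp [List.append_assoc]
        rw [e2, hword_congr_middle _ _ hA]
        congr 1
        simp [List.append_assoc]
  exact key (n + 1) (le_refl _)

end PNproof10

section PNproof11

variable (n : ℕ) (dx dy : ℕ → ℕ)

lemma pstar_bounds : ∀ p ∈ Pstar n dx dy, p.1 < dY n dy ∧ p.2 < dX n dx := by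
  intro p hp
  unfold Pstar at hp
  rw [Finset.mem_sdiff, Finset.mem_product, Finset.mem_range, Finset.mem_range] at hp
  exact hp.1

lemma pstar_not_snake : ∀ p ∈ Pstar n dx dy, p ∉ snake n dx dy := by
  intro p hp
  unfold Pstar at hp
  rw [Finset.mem_sdiff] at hp
  exact hp.2

lemma beta_sub_snake {k : ℕ} (hk1 : 1 ≤ k) (hk2 : k ≤ n) :
    betaBlock n dx dy k ⊆ snake n dx dy := by
  intro p hp
  unfold snake
  rw [Finset.mem_biUnion]
  exact ⟨k, Finset.mem_Icc.mpr ⟨hk1, hk2⟩, Finset.mem_union_right _ hp⟩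

lemma alpha_sub_snake {k : ℕ} (hk1 : 1 ≤ k) (hk2 : k ≤ n) :
    alphaBlock n dx dy k ⊆ snake n dx dy := by
  intro p hp
  unfold snake
  rw [Finset.mem_biUnion]
  exact ⟨k, Finset.mem_Icc.mpr ⟨hk1, hk2⟩, Finset.mem_union_left _ hp⟩

lemma mem_betaBlock {k x y : ℕ} :
    (x, y) ∈ betaBlock n dx dy k ↔
      (rowY dy k ≤ x ∧ x < rowY dy k + dy k) ∧
        colX n dx k ≤ y ∧ y < colX n dx k + dx k := by
  unfold betaBlock
  rw [Finset.mem_product, Finset.mem_Ico, Finset.mem_Ico]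

lemma mem_alphaBlock {k x y : ℕ} :
    (x, y) ∈ alphaBlock n dx dy k ↔
      (rowY dy (k - 1) ≤ x ∧ x < rowY dy (k - 1) + dy (k - 1)) ∧
        colX n dx k ≤ y ∧ y < colX n dx k + dx k := by
  unfold alphaBlock
  rw [Finset.mem_product, Finset.mem_Ico, Finset.mem_Ico]

/-- unique `x`-block containing a given column -/
lemma xcol_unique {k k' c : ℕ} (hk1 : 1 ≤ k) (hk2 : k ≤ n) (hk'1 : 1 ≤ k') (hk'2 : k' ≤ n)
    (h1 : colX n dx k ≤ c) (h2 : c < colX n dx k + dx k)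
    (h1' : colX n dx k' ≤ c) (h2' : c < colX n dx k' + dx k') : k = k' := by
  have hc : colX n dx k + dx k = colX n dx (k - 1) := by
    have := colX_succ n dx (k := k - 1) (by omega)
    rw [show k - 1 + 1 = k by omega] at this
    omega
  have hc' : colX n dx k' + dx k' = colX n dx (k' - 1) := by
    have := colX_succ n dx (k := k' - 1) (by omega)
    rw [show k' - 1 + 1 = k' by omega] at this
    omega
  by_contra hne
  rcases Nat.lt_or_ge k k' with hlt | hge
  · have := colX_antitone n dx (show k ≤ k' - 1 by omega)
    omega
  · have := colX_antitone n dx (show k' ≤ k - 1 by omega)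
    omega

/-- membership in `PNmap` -/
lemma mem_PNmap {T : LaceData} {p : ℕ × ℕ} :
    p ∈ PNmap n dx dy T ↔ p ∈ Pstar n dx dy ∨ ∃ k, 1 ≤ k ∧ k ≤ n ∧
      (p ∈ (T.1 k).image (fun q => (q.1 + rowY dy k, q.2 + colX n dx k)) ∨
       p ∈ (rotF (dy (k - 1)) (dx k) (T.2 k)).image
         (fun q => (q.1 + rowY dy (k - 1), q.2 + colX n dx k))) := by
  unfold PNmap
  rw [Finset.mem_union, Finset.mem_biUnion]
  constructor
  · rintro (h | ⟨k, hk, hmem⟩)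
    · exact Or.inl h
    · rw [Finset.mem_Icc] at hk
      rw [Finset.mem_union] at hmem
      exact Or.inr ⟨k, hk.1, hk.2, hmem⟩
  · rintro (h | ⟨k, hk1, hk2, hmem⟩)
    · exact Or.inl h
    · exact Or.inr ⟨k, Finset.mem_Icc.mpr ⟨hk1, hk2⟩, Finset.mem_union.mpr hmem⟩

/-- hypotheses: pointwise bounds of the tuple entries -/
def Tbounds (T : LaceData) : Prop :=
  ∀ k, 1 ≤ k → k ≤ n → (∀ p ∈ T.1 k, p.1 < dy k ∧ p.2 < dx k) ∧
    (∀ p ∈ T.2 k, p.1 < dy (k - 1) ∧ p.2 < dx k)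

lemma PNmap_bounds {T : LaceData} (hT : Tbounds n dx dy T) :
    ∀ p ∈ PNmap n dx dy T, p.1 < dY n dy ∧ p.2 < dX n dx := by
  intro p hp
  rw [mem_PNmap] at hp
  rcases hp with hp | ⟨k, hk1, hk2, hp | hp⟩
  · exact pstar_bounds n dx dy p hp
  · rw [Finset.mem_image] at hp
    obtain ⟨⟨a, b⟩, hab, heq⟩ := hp
    obtain ⟨ha, hb⟩ := (hT k hk1 hk2).1 _ hab
    have h1 := rowY_add_le n dy hk2
    have h2 : colX n dx k + dx k ≤ dX n dx := by
      have := colX_succ n dx (k := k - 1) (by omega)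
      rw [show k - 1 + 1 = k by omega] at this
      have := colX_le_dX n dx (k - 1)
      omega
    rw [← heq]
    constructor <;> simp only <;> omega
  · rw [Finset.mem_image] at hp
    obtain ⟨⟨a, b⟩, hab, heq⟩ := hp
    obtain ⟨ha, hb⟩ := rotF_bounds (fun q hq => (hT k hk1 hk2).2 q hq) _ hab
    have h1 := rowY_add_le n dy (j := k - 1) (by omega)
    have h1' : rowY dy (k - 1) + dy (k - 1) ≤ dY n dy := h1
    have h2 : colX n dx k + dx k ≤ dX n dx := by
      have := colX_succ n dx (k := k - 1) (by omega)
      rw [show k - 1 + 1 = k by omega] at this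
      have := colX_le_dX n dx (k - 1)
      omega
    rw [← heq]
    constructor <;> simp only <;> omega

/-- extraction of the `β` blocks from `PNmap` -/
lemma miniB_PNmap {T : LaceData} (hT : Tbounds n dx dy T) {k : ℕ}
    (hk1 : 1 ≤ k) (hk2 : k ≤ n) : miniB n dx dy (PNmap n dx dy T) k = T.1 k := by
  ext ⟨a, b⟩
  constructor
  · intro h
    obtain ⟨ha, hb⟩ := miniB_bounds n dx dy (PNmap n dx dy T) k _ h
    simp only at ha hb
    have hmem := (mem_miniB n dx dy ha hb).mp h
    rw [mem_PNmap] at hmem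
    rcases hmem with hmem | ⟨k', hk'1, hk'2, hmem | hmem⟩
    · exfalso
      refine pstar_not_snake n dx dy _ hmem (beta_sub_snake n dx dy hk1 hk2 ?_)
      rw [mem_betaBlock]
      constructor <;> constructor <;> omega
    · rw [Finset.mem_image] at hmem
      obtain ⟨⟨a', b'⟩, hab', heq⟩ := hmem
      obtain ⟨ha', hb'⟩ := (hT k' hk'1 hk'2).1 _ hab'
      simp only [Prod.mk.injEq] at heq
      have hkk : k = k' := by
        apply xcol_unique n dx (c := colX n dx k + b) hk1 hk2 hk'1 hk'2
          (by omega) (by omega) (by omega) (by omega)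
      subst hkk
      rw [show ((a : ℕ), (b : ℕ)) = (a', b') by simp only [Prod.mk.injEq]; omega]
      exact hab'
    · exfalso
      rw [Finset.mem_image] at hmem
      obtain ⟨⟨a', b'⟩, hab', heq⟩ := hmem
      obtain ⟨ha', hb'⟩ := rotF_bounds (fun q hq => (hT k' hk'1 hk'2).2 q hq) _ hab'
      simp only [Prod.mk.injEq] at heq
      have hkk : k = k' := by
        apply xcol_unique n dx (c := colX n dx k + b) hk1 hk2 hk'1 hk'2
          (by omega) (by omega) (by omega) (by omega)
      subst hkk
      -- row clash: the α block rows end where the β block rows begin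
      have : rowY dy (k - 1) + dy (k - 1) = rowY dy k := by
        have := rowY_succ dy (k - 1)
        rw [show k - 1 + 1 = k by omega] at this
        omega
      omega
  · intro h
    obtain ⟨ha, hb⟩ := (hT k hk1 hk2).1 _ h
    refine (mem_miniB n dx dy ha hb).mpr ?_
    rw [mem_PNmap]
    refine Or.inr ⟨k, hk1, hk2, Or.inl ?_⟩
    rw [Finset.mem_image]
    exact ⟨(a, b), h, by simp only [Prod.mk.injEq]; omega⟩

/-- extraction of the `α` blocks from `PNmap` -/
lemma miniA_PNmap {T : LaceData} (hT : Tbounds n dx dy T) {k : ℕ}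
    (hk1 : 1 ≤ k) (hk2 : k ≤ n) :
    miniA n dx dy (PNmap n dx dy T) k = rotF (dy (k - 1)) (dx k) (T.2 k) := by
  ext ⟨a, b⟩
  constructor
  · intro h
    obtain ⟨ha, hb⟩ := miniA_bounds n dx dy (PNmap n dx dy T) k _ h
    simp only at ha hb
    have hmem := (mem_miniA n dx dy ha hb).mp h
    rw [mem_PNmap] at hmem
    rcases hmem with hmem | ⟨k', hk'1, hk'2, hmem | hmem⟩
    · exfalso
      refine pstar_not_snake n dx dy _ hmem (alpha_sub_snake n dx dy hk1 hk2 ?_)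
      rw [mem_alphaBlock]
      constructor <;> constructor <;> omega
    · exfalso
      rw [Finset.mem_image] at hmem
      obtain ⟨⟨a', b'⟩, hab', heq⟩ := hmem
      obtain ⟨ha', hb'⟩ := (hT k' hk'1 hk'2).1 _ hab'
      simp only [Prod.mk.injEq] at heq
      have hkk : k = k' := by
        apply xcol_unique n dx (c := colX n dx k + b) hk1 hk2 hk'1 hk'2
          (by omega) (by omega) (by omega) (by omega)
      subst hkk
      have : rowY dy (k - 1) + dy (k - 1) = rowY dy k := by
        have := rowY_succ dy (k - 1)
        rw [show k - 1 + 1 = k by omega] at this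
        omega
      omega
    · rw [Finset.mem_image] at hmem
      obtain ⟨⟨a', b'⟩, hab', heq⟩ := hmem
      obtain ⟨ha', hb'⟩ := rotF_bounds (fun q hq => (hT k' hk'1 hk'2).2 q hq) _ hab'
      simp only [Prod.mk.injEq] at heq
      have hkk : k = k' := by
        apply xcol_unique n dx (c := colX n dx k + b) hk1 hk2 hk'1 hk'2
          (by omega) (by omega) (by omega) (by omega)
      subst hkk
      rw [show ((a : ℕ), (b : ℕ)) = (a', b') by simp only [Prod.mk.injEq]; omega]
      exact hab'
  · intro h
    obtain ⟨ha, hb⟩ := rotF_bounds (fun q hq => (hT k hk1 hk2).2 q hq) _ h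
    refine (mem_miniA n dx dy ha hb).mpr ?_
    rw [mem_PNmap]
    refine Or.inr ⟨k, hk1, hk2, Or.inr ?_⟩
    rw [Finset.mem_image]
    exact ⟨(a, b), h, by simp only [Prod.mk.injEq]; omega⟩

end PNproof11

section PNproof12

variable (n : ℕ) (dx dy : ℕ → ℕ)

lemma mem_pipesFin {k l : ℕ} {v : Equiv.Perm ℕ} {Q : Finset (ℕ × ℕ)} :
    Q ∈ pipesFin k l v ↔ (∀ p ∈ Q, p.1 < k ∧ p.2 < l) ∧ demazure k l Q = v := by
  unfold pipesFin
  rw [Finset.mem_filter, Finset.mem_powerset]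
  constructor
  · rintro ⟨h1, h2⟩
    refine ⟨fun p hp => ?_, h2⟩
    have := h1 hp
    rw [Finset.mem_product, Finset.mem_range, Finset.mem_range] at this
    exact this
  · rintro ⟨h1, h2⟩
    refine ⟨fun p hp => ?_, h2⟩
    rw [Finset.mem_product, Finset.mem_range, Finset.mem_range]
    exact h1 p hp

lemma mem_pipesNW {vZ : Equiv.Perm ℕ} {P : Finset (ℕ × ℕ)} :
    P ∈ pipesNW n dx dy vZ ↔ (∀ p ∈ P, p.1 < dY n dy ∧ p.2 < dX n dx) ∧
      demazure (dd n dx dy) (dd n dx dy) P = vZ := by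
  unfold pipesNW
  rw [Finset.mem_filter, Finset.mem_powerset]
  constructor
  · rintro ⟨h1, h2⟩
    refine ⟨fun p hp => ?_, h2⟩
    have := h1 hp
    rw [Finset.mem_product, Finset.mem_range, Finset.mem_range] at this
    exact this
  · rintro ⟨h1, h2⟩
    refine ⟨fun p hp => ?_, h2⟩
    rw [Finset.mem_product, Finset.mem_range, Finset.mem_range]
    exact h1 p hp

lemma image_miniB {P : Finset (ℕ × ℕ)} {k : ℕ} :
    (miniB n dx dy P k).image (fun q => (q.1 + rowY dy k, q.2 + colX n dx k))
      = P ∩ betaBlock n dx dy k := by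
  ext ⟨x, y⟩
  rw [Finset.mem_image, Finset.mem_inter]
  constructor
  · rintro ⟨⟨a, b⟩, hab, heq⟩
    obtain ⟨ha, hb⟩ := miniB_bounds n dx dy P k _ hab
    simp only at ha hb
    simp only [Prod.mk.injEq] at heq
    have hP := (mem_miniB n dx dy ha hb).mp hab
    constructor
    · rwa [show ((x : ℕ), (y : ℕ)) = (rowY dy k + a, colX n dx k + b) by
        simp only [Prod.mk.injEq]; omega]
    · rw [mem_betaBlock]
      constructor <;> constructor <;> omega
  · rintro ⟨hP, hβ⟩
    rw [mem_betaBlock] at hβ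
    obtain ⟨⟨h1, h2⟩, h3, h4⟩ := hβ
    refine ⟨(x - rowY dy k, y - colX n dx k), ?_, by simp only [Prod.mk.injEq]; omega⟩
    refine (mem_miniB n dx dy (by omega) (by omega)).mpr ?_
    rwa [show (rowY dy k + (x - rowY dy k), colX n dx k + (y - colX n dx k)) = ((x : ℕ), (y : ℕ))
      by simp only [Prod.mk.injEq]; omega]

lemma image_miniA {P : Finset (ℕ × ℕ)} {k : ℕ} :
    (miniA n dx dy P k).image (fun q => (q.1 + rowY dy (k - 1), q.2 + colX n dx k))
      = P ∩ alphaBlock n dx dy k := by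
  ext ⟨x, y⟩
  rw [Finset.mem_image, Finset.mem_inter]
  constructor
  · rintro ⟨⟨a, b⟩, hab, heq⟩
    obtain ⟨ha, hb⟩ := miniA_bounds n dx dy P k _ hab
    simp only at ha hb
    simp only [Prod.mk.injEq] at heq
    have hP := (mem_miniA n dx dy ha hb).mp hab
    constructor
    · rwa [show ((x : ℕ), (y : ℕ)) = (rowY dy (k - 1) + a, colX n dx k + b) by
        simp only [Prod.mk.injEq]; omega]
    · rw [mem_alphaBlock]
      constructor <;> constructor <;> omega
  · rintro ⟨hP, hα⟩
    rw [mem_alphaBlock] at hα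
    obtain ⟨⟨h1, h2⟩, h3, h4⟩ := hα
    refine ⟨(x - rowY dy (k - 1), y - colX n dx k), ?_, by simp only [Prod.mk.injEq]; omega⟩
    refine (mem_miniA n dx dy (by omega) (by omega)).mpr ?_
    rwa [show (rowY dy (k - 1) + (x - rowY dy (k - 1)), colX n dx k + (y - colX n dx k))
      = ((x : ℕ), (y : ℕ)) by simp only [Prod.mk.injEq]; omega]

end PNproof12




/-- The pipe network map is a bijection from
`⋃_{v ∈ X_Ω} ∏_k (Pipes(v_k) × Pipes(v^k))` onto `Pipes(v_0, v(Ω))`. -/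
theorem pipe_network_bijection (n : ℕ) (dx dy : ℕ → ℕ) (L₀ : LaceData)
    (hL₀ : IsLacingDiagram n dx dy L₀) (vZ : Equiv.Perm ℕ)
    (hvZ : IsZelevinsky n dx dy L₀ vZ) :
    Set.BijOn (PNmap n dx dy) (PNdomain n dx dy vZ)
      {P | P ∈ pipesNW n dx dy vZ} := by
  classical
  -- bounds of domain elements
  have domBounds : ∀ T ∈ PNdomain n dx dy vZ, Tbounds n dx dy T := by
    rintro T ⟨hTout, x, hx, hTk⟩ k hk1 hk2
    obtain ⟨h1, h2⟩ := hTk k hk1 hk2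
    exact ⟨(mem_pipesFin.mp h1).1, (mem_pipesFin.mp h2).1⟩
  -- extraction of the tuple from its pipe network
  have extract : ∀ T ∈ PNdomain n dx dy vZ, ∀ k, 1 ≤ k → k ≤ n →
      miniB n dx dy (PNmap n dx dy T) k = T.1 k ∧
      rotF (dy (k - 1)) (dx k) (miniA n dx dy (PNmap n dx dy T) k) = T.2 k := by
    intro T hT k hk1 hk2
    have hTb := domBounds T hT
    refine ⟨miniB_PNmap n dx dy hTb hk1 hk2, ?_⟩
    rw [miniA_PNmap n dx dy hTb hk1 hk2, rotF_invol (fun q hq => (hTb k hk1 hk2).2 q hq)]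
  refine ⟨?_, ?_, ?_⟩
  · -- MapsTo
    rintro T hT
    obtain ⟨hTout, x, hx, hTk⟩ := hT
    obtain ⟨P', hP'mem, hpi⟩ := hx
    have hTb : Tbounds n dx dy T := domBounds T ⟨hTout, x, ⟨P', hP'mem, hpi⟩, hTk⟩
    obtain ⟨hP'b, hP'd⟩ := (mem_pipesNW n dx dy).mp hP'mem
    have hP'star : Pstar n dx dy ⊆ P' := pstar_subset n dx dy hL₀ hvZ hP'b hP'd
    rw [Set.mem_setOf_eq, mem_pipesNW n dx dy]
    refine ⟨PNmap_bounds n dx dy hTb, ?_⟩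
    have hmain := demazure_eq_of_mini_eq n dx dy (PNmap_bounds n dx dy hTb) hP'b
      (Finset.subset_union_left) hP'star
      (fun k hk1 hk2 => by
        rw [miniB_PNmap n dx dy hTb hk1 hk2]
        have h1 := (mem_pipesFin.mp (hTk k hk1 hk2).1).2
        rw [h1, ← hpi]
        show (if 1 ≤ k ∧ k ≤ n then demazure (dy k) (dx k) (miniB n dx dy P' k) else 1)
          = demazure (dy k) (dx k) (miniB n dx dy P' k)
        rw [if_pos (⟨hk1, hk2⟩ : 1 ≤ k ∧ k ≤ n)])
      (fun k hk1 hk2 => by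
        rw [miniA_PNmap n dx dy hTb hk1 hk2,
          rotF_invol (fun q hq => (hTb k hk1 hk2).2 q hq)]
        have h2 := (mem_pipesFin.mp (hTk k hk1 hk2).2).2
        rw [h2, ← hpi]
        show (if 1 ≤ k ∧ k ≤ n then
            demazure (dy (k - 1)) (dx k)
              (rotF (dy (k - 1)) (dx k) (miniA n dx dy P' k)) else 1)
          = demazure (dy (k - 1)) (dx k) (rotF (dy (k - 1)) (dx k) (miniA n dx dy P' k))
        rw [if_pos (⟨hk1, hk2⟩ : 1 ≤ k ∧ k ≤ n)])
    rw [hmain, hP'd]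
  · -- InjOn
    intro T hT T' hT' heq
    have h1 : T.1 = T'.1 := by
      funext k
      by_cases hk : 1 ≤ k ∧ k ≤ n
      · rw [← (extract T hT k hk.1 hk.2).1, ← (extract T' hT' k hk.1 hk.2).1, heq]
      · have e1 := (hT.1 k (by omega)).1
        have e2 := (hT'.1 k (by omega)).1
        rw [e1, e2]
    have h2 : T.2 = T'.2 := by
      funext k
      by_cases hk : 1 ≤ k ∧ k ≤ n
      · rw [← (extract T hT k hk.1 hk.2).2, ← (extract T' hT' k hk.1 hk.2).2, heq]
      · have e1 := (hT.1 k (by omega)).2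
        have e2 := (hT'.1 k (by omega)).2
        rw [e1, e2]
    exact Prod.ext h1 h2
  · -- SurjOn
    intro P hPmem
    rw [Set.mem_setOf_eq] at hPmem
    obtain ⟨hPb, hPd⟩ := (mem_pipesNW n dx dy).mp hPmem
    have hPstar : Pstar n dx dy ⊆ P := pstar_subset n dx dy hL₀ hvZ hPb hPd
    set T0 : LaceData := (fun k => if 1 ≤ k ∧ k ≤ n then miniB n dx dy P k else ∅,
      fun k => if 1 ≤ k ∧ k ≤ n then rotF (dy (k - 1)) (dx k) (miniA n dx dy P k) else ∅)
      with hT0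
    have hT01 : ∀ k, 1 ≤ k → k ≤ n → T0.1 k = miniB n dx dy P k := by
      intro k h1 h2
      show (if 1 ≤ k ∧ k ≤ n then miniB n dx dy P k else ∅) = _
      rw [if_pos ⟨h1, h2⟩]
    have hT02 : ∀ k, 1 ≤ k → k ≤ n →
        T0.2 k = rotF (dy (k - 1)) (dx k) (miniA n dx dy P k) := by
      intro k h1 h2
      show (if 1 ≤ k ∧ k ≤ n then rotF (dy (k - 1)) (dx k) (miniA n dx dy P k) else ∅) = _
      rw [if_pos ⟨h1, h2⟩]
    refine ⟨T0, ⟨?_, ?_⟩, ?_⟩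
    · intro k hk
      constructor
      · show (if 1 ≤ k ∧ k ≤ n then miniB n dx dy P k else ∅) = ∅
        rw [if_neg (by omega)]
      · show (if 1 ≤ k ∧ k ≤ n then rotF (dy (k - 1)) (dx k) (miniA n dx dy P k) else ∅) = ∅
        rw [if_neg (by omega)]
    · refine ⟨piOp n dx dy P, ⟨P, hPmem, rfl⟩, ?_⟩
      intro k hk1 hk2
      constructor
      · rw [mem_pipesFin, hT01 k hk1 hk2]
        refine ⟨miniB_bounds n dx dy P k, ?_⟩
        show _ = (if 1 ≤ k ∧ k ≤ n then demazure (dy k) (dx k) (miniB n dx dy P k) else 1)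
        rw [if_pos (⟨hk1, hk2⟩ : 1 ≤ k ∧ k ≤ n)]
      · rw [mem_pipesFin, hT02 k hk1 hk2]
        refine ⟨rotF_bounds (miniA_bounds n dx dy P k), ?_⟩
        show _ = (if 1 ≤ k ∧ k ≤ n then demazure (dy (k - 1)) (dx k)
          (rotF (dy (k - 1)) (dx k) (miniA n dx dy P k)) else 1)
        rw [if_pos (⟨hk1, hk2⟩ : 1 ≤ k ∧ k ≤ n)]
    · -- PNmap applied to the extraction recovers P
      apply Finset.ext
      intro p
      rw [mem_PNmap]
      constructor
      · rintro (h | ⟨k, hk1, hk2, h | h⟩)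
        · exact hPstar h
        · rw [hT01 k hk1 hk2, image_miniB] at h
          exact (Finset.mem_inter.mp h).1
        · rw [hT02 k hk1 hk2, rotF_invol (miniA_bounds n dx dy P k), image_miniA] at h
          exact (Finset.mem_inter.mp h).1
      · intro hp
        by_cases hs : p ∈ snake n dx dy
        · unfold snake at hs
          rw [Finset.mem_biUnion] at hs
          obtain ⟨k, hk, hcell⟩ := hs
          rw [Finset.mem_Icc] at hk
          rw [Finset.mem_union] at hcell
          rcases hcell with hcell | hcell
          · refine Or.inr ⟨k, hk.1, hk.2, Or.inr ?_⟩
            rw [hT02 k hk.1 hk.2, rotF_invol (miniA_bounds n dx dy P k), image_miniA]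
            exact Finset.mem_inter.mpr ⟨hp, hcell⟩
          · refine Or.inr ⟨k, hk.1, hk.2, Or.inl ?_⟩
            rw [hT01 k hk.1 hk.2, image_miniB]
            exact Finset.mem_inter.mpr ⟨hp, hcell⟩
        · left
          unfold Pstar
          rw [Finset.mem_sdiff, Finset.mem_product, Finset.mem_range, Finset.mem_range]
          exact ⟨hPb p hp, hs⟩

end QP
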